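/- arXiv:1307.7534 — 5 statements merged into one kernel-verified Lean document; each statement's English description precedes it below -/
import Mathlib

section
/- Let B = [b_1,…,b_n] be a lattice basis and 1 ≤ k < n. Then the swap of adjacent vectors satisfies Pot(σ_{k,k+1} B) = (‖π_k(b_{k+1})‖² / ‖π_k(b_k)‖²) · Pot(B). -/
open Finset

/-- π_j : orthogonal projection onto the orthogonal complement of span{b_0,…,b_{j-1}}. -/
noncomputable def projPerp {n m : ℕ} (b : Fin n → EuclideanSpace ℝ (Fin m)) (j : ℕ)
    (x : EuclideanSpace ℝ (Fin m)) : EuclideanSpace ℝ (Fin m) :=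
  x - (Submodule.orthogonalProjectionOnto (Submodule.span ℝ (b '' {i | (i : ℕ) < j})) x : EuclideanSpace ℝ (Fin m))

/-- The Gram–Schmidt vector b_i^* = π_i(b_i). -/
noncomputable def bstar {n m : ℕ} (b : Fin n → EuclideanSpace ℝ (Fin m)) (i : Fin n) :
    EuclideanSpace ℝ (Fin m) :=
  projPerp b i.val (b i)

/-- The potential Pot(B) = ∏ ‖b_i^*‖^{2(n-i+1)} (1-based), i.e. ∏ ‖b_i^*‖^{2(n-i)} (0-based). -/
noncomputable def Pot {n m : ℕ} (b : Fin n → EuclideanSpace ℝ (Fin m)) : ℝ :=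
  ∏ i : Fin n, ‖bstar b i‖ ^ (2 * (n - i.val))

/-- Gram–Schmidt coefficient μ_{i,j} = ⟨b_i, b_j^*⟩ / ⟨b_j^*, b_j^*⟩. -/
noncomputable def mu {n m : ℕ} (b : Fin n → EuclideanSpace ℝ (Fin m)) (i j : Fin n) : ℝ :=
  (inner ℝ (b i) (bstar b j) : ℝ) / (inner ℝ (bstar b j) (bstar b j) : ℝ)

/-- Size-reduced: |μ_{i,j}| ≤ 1/2 for all j < i. -/
def SizeReduced {n m : ℕ} (b : Fin n → EuclideanSpace ℝ (Fin m)) : Prop :=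
  ∀ i j : Fin n, j < i → |mu b i j| ≤ 1/2

/-- The deep-insertion reordering σ_{k,ℓ}B = [b_1,…,b_{k-1}, b_ℓ, b_k,…,b_{ℓ-1}, b_{ℓ+1},…,b_n]. -/
def insertFam {n : ℕ} {α : Type*} (b : Fin n → α) (k l : Fin n) : Fin n → α :=
  fun i => if i.val < k.val ∨ l.val < i.val then b i
    else if i = k then b l
    else b ⟨i.val - 1, lt_of_le_of_lt (Nat.sub_le _ _) i.isLt⟩


section Aux

variable {m : ℕ}

local notation "E" => EuclideanSpace ℝ (Fin m)

lemma mem_orthogonal_span' {S : Set E} {w : E}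
    (h : ∀ s ∈ S, (inner ℝ s w : ℝ) = 0) : w ∈ (Submodule.span ℝ S)ᗮ := by
  rw [Submodule.mem_orthogonal]
  intro u hu
  induction hu using Submodule.span_induction with
  | mem s hs => exact h s hs
  | zero => simp
  | add x y _ _ hx hy => rw [inner_add_left, hx, hy]; ring
  | smul c x _ hx => rw [real_inner_smul_left, hx]; ring

lemma projPerp_spec {n : ℕ} (b : Fin n → E) (j : ℕ) (x : E) :
    x - projPerp b j x ∈ Submodule.span ℝ (b '' {i | (i : ℕ) < j}) ∧
      projPerp b j x ∈ (Submodule.span ℝ (b '' {i | (i : ℕ) < j}))ᗮ := by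
  constructor
  · simp only [projPerp, sub_sub_cancel]
    exact Submodule.coe_mem ((Submodule.span ℝ (b '' {i | (i : ℕ) < j})).orthogonalProjectionOnto x)
  · exact Submodule.sub_starProjection_mem_orthogonal x

lemma projPerp_eq {n : ℕ} {b : Fin n → E} {j : ℕ} {x w : E}
    (h1 : x - w ∈ Submodule.span ℝ (b '' {i | (i : ℕ) < j}))
    (h2 : w ∈ (Submodule.span ℝ (b '' {i | (i : ℕ) < j}))ᗮ) :
    projPerp b j x = w := by
  have h := Submodule.eq_starProjection_of_mem_of_inner_eq_zero
    (K := Submodule.span ℝ (b '' {i | (i : ℕ) < j})) (u := x) h1 ?_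
  · simp only [projPerp, Submodule.coe_orthogonalProjectionOnto_apply, h, sub_sub_cancel]
  · intro y hy
    have : x - (x - w) = w := by abel
    rw [this, real_inner_comm]
    exact (Submodule.mem_orthogonal _ _).1 h2 y hy

lemma projPerp_congr {n n' : ℕ} {b : Fin n → E} {c : Fin n' → E} {j j' : ℕ}
    (h : b '' {i | (i : ℕ) < j} = c '' {i | (i : ℕ) < j'}) (x : E) :
    projPerp b j x = projPerp c j' x := by
  apply projPerp_eq
  · rw [h]; exact (projPerp_spec c j' x).1
  · rw [h]; exact (projPerp_spec c j' x).2

lemma projPerp_eq_zero_iff {n : ℕ} {b : Fin n → E} {j : ℕ} {x : E} :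
    projPerp b j x = 0 ↔ x ∈ Submodule.span ℝ (b '' {i | (i : ℕ) < j}) := by
  rw [projPerp, sub_eq_zero, eq_comm, ← Submodule.starProjection_apply, Submodule.starProjection_eq_self_iff]

lemma bstar_ne_zero {n : ℕ} {b : Fin n → E} (hLI : LinearIndependent ℝ b) (i : Fin n) :
    bstar b i ≠ 0 := by
  intro h
  have hx : b i ∈ Submodule.span ℝ (b '' {j : Fin n | (j : ℕ) < i.val}) :=
    projPerp_eq_zero_iff.1 h
  exact hLI.notMem_span_image (by simp) hx

lemma gs_key {S : Set E} {x y u v : E}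
    (hux : x - u ∈ Submodule.span ℝ S) (hu' : u ∈ (Submodule.span ℝ S)ᗮ) (hu0 : u ≠ 0)
    (hvy : y - v ∈ Submodule.span ℝ S) (hv' : v ∈ (Submodule.span ℝ S)ᗮ) :
    y - (v - ((inner ℝ v u : ℝ) / (inner ℝ u u : ℝ)) • u) ∈ Submodule.span ℝ (S ∪ {x}) ∧
      (v - ((inner ℝ v u : ℝ) / (inner ℝ u u : ℝ)) • u) ∈ (Submodule.span ℝ (S ∪ {x}))ᗮ := by
  have hA : (inner ℝ u u : ℝ) ≠ 0 := by
    rw [real_inner_self_eq_norm_sq]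
    exact pow_ne_zero _ (norm_ne_zero_iff.2 hu0)
  have hSle : Submodule.span ℝ S ≤ Submodule.span ℝ (S ∪ {x}) :=
    Submodule.span_mono Set.subset_union_left
  have hxmem : x ∈ Submodule.span ℝ (S ∪ {x}) :=
    Submodule.subset_span (Set.mem_union_right _ rfl)
  have hw : v - ((inner ℝ v u : ℝ) / (inner ℝ u u : ℝ)) • u ∈ (Submodule.span ℝ S)ᗮ :=
    Submodule.sub_mem _ hv' (Submodule.smul_mem _ _ hu')
  constructor
  · have heq : y - (v - ((inner ℝ v u : ℝ) / (inner ℝ u u : ℝ)) • u)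
        = (y - v) + ((inner ℝ v u : ℝ) / (inner ℝ u u : ℝ)) • x
          - ((inner ℝ v u : ℝ) / (inner ℝ u u : ℝ)) • (x - u) := by
      simp only [smul_sub]; abel
    rw [heq]
    exact Submodule.sub_mem _ (Submodule.add_mem _ (hSle hvy) (Submodule.smul_mem _ _ hxmem))
      (Submodule.smul_mem _ _ (hSle hux))
  · apply mem_orthogonal_span'
    intro s hs
    rcases hs with hs | hs
    · exact Submodule.inner_right_of_mem_orthogonal (Submodule.subset_span hs) hw
    · have hsx : s = x := hs
      subst hsx
      have h1 : (inner ℝ (s - u) (v - ((inner ℝ v u : ℝ) / (inner ℝ u u : ℝ)) • u) : ℝ) = 0 :=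
        Submodule.inner_right_of_mem_orthogonal hux hw
      have h2 : (inner ℝ u (v - ((inner ℝ v u : ℝ) / (inner ℝ u u : ℝ)) • u) : ℝ) = 0 := by
        rw [inner_sub_right, real_inner_smul_right, real_inner_comm u v,
          div_mul_cancel₀ _ hA, sub_self]
      have h3 : (inner ℝ s (v - ((inner ℝ v u : ℝ) / (inner ℝ u u : ℝ)) • u) : ℝ)
          = (inner ℝ (s - u) (v - ((inner ℝ v u : ℝ) / (inner ℝ u u : ℝ)) • u) : ℝ)
            + (inner ℝ u (v - ((inner ℝ v u : ℝ) / (inner ℝ u u : ℝ)) • u) : ℝ) := by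
        rw [inner_sub_left]; ring
      rw [h3, h1, h2, add_zero]

end Aux

/-- Pot(σ_{k,k+1}B) = (‖π_k(b_{k+1})‖²/‖π_k(b_k)‖²) · Pot(B). -/
theorem pot_swap {n m : ℕ} (b : Fin n → EuclideanSpace ℝ (Fin m))
    (hLI : LinearIndependent ℝ b) (k : ℕ) (hk : k + 1 < n) :
    Pot (insertFam b ⟨k, Nat.lt_of_succ_lt hk⟩ ⟨k + 1, hk⟩) =
      (‖projPerp b k (b ⟨k + 1, hk⟩)‖ ^ 2 / ‖projPerp b k (b ⟨k, Nat.lt_of_succ_lt hk⟩)‖ ^ 2) *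
        Pot b := by
  set k0 : Fin n := ⟨k, Nat.lt_of_succ_lt hk⟩ with hk0def
  set k1 : Fin n := ⟨k + 1, hk⟩ with hk1def
  set b' := insertFam b k0 k1 with hb'def
  have hk10 : k1 ≠ k0 := by simp [hk0def, hk1def, Fin.ext_iff]
  -- values of b'
  have hb'lt : ∀ i : Fin n, i.val < k → b' i = b i := by
    intro i hi
    simp only [hb'def, insertFam]
    rw [if_pos (Or.inl hi)]
  have hb'gt : ∀ i : Fin n, k + 1 < i.val → b' i = b i := by
    intro i hi
    simp only [hb'def, insertFam]
    rw [if_pos (Or.inr hi)]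
  have hb'k0 : b' k0 = b k1 := by
    simp [hb'def, insertFam, Fin.lt_def, hk0def, hk1def]
  have hb'k1 : b' k1 = b k0 := by
    simp only [hb'def, insertFam]
    rw [if_neg (by simp [hk0def, hk1def]), if_neg (by simp [Fin.ext_iff, hk0def, hk1def])]
    rfl
  -- image set equalities
  have hSlow : ∀ j : ℕ, j ≤ k → b' '' {i : Fin n | (i : ℕ) < j} = b '' {i | (i : ℕ) < j} := by
    intro j hj
    apply Set.image_congr
    intro i hi
    exact hb'lt i (lt_of_lt_of_le hi hj)
  have hShigh : ∀ j : ℕ, k + 1 < j →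
      b' '' {i : Fin n | (i : ℕ) < j} = b '' {i | (i : ℕ) < j} := by
    intro j hj
    ext y
    constructor
    · rintro ⟨i, hi, rfl⟩
      simp only [Set.mem_setOf_eq] at hi
      rcases lt_trichotomy i.val k with h | h | h
      · exact ⟨i, hi, (hb'lt i h).symm⟩
      · have hik : i = k0 := Fin.ext h
        subst hik
        exact ⟨k1, show k + 1 < j from hj, by rw [hb'k0]⟩
      · rcases Nat.lt_or_ge (k + 1) i.val with h' | h'
        · exact ⟨i, hi, (hb'gt i h').symm⟩
        · have hik : i = k1 := Fin.ext (show (i : ℕ) = k + 1 by omega)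
          subst hik
          exact ⟨k0, show k < j by omega, by rw [hb'k1]⟩
    · rintro ⟨i, hi, rfl⟩
      simp only [Set.mem_setOf_eq] at hi
      rcases lt_trichotomy i.val k with h | h | h
      · exact ⟨i, hi, hb'lt i h⟩
      · have hik : i = k0 := Fin.ext h
        subst hik
        exact ⟨k1, show k + 1 < j from hj, hb'k1⟩
      · rcases Nat.lt_or_ge (k + 1) i.val with h' | h'
        · exact ⟨i, hi, hb'gt i h'⟩
        · have hik : i = k1 := Fin.ext (show (i : ℕ) = k + 1 by omega)
          subst hik
          exact ⟨k0, show k < j by omega, hb'k0⟩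
  -- bstar equalities off the swap
  have hbsLow : ∀ i : Fin n, i.val < k → bstar b' i = bstar b i := by
    intro i hi
    show projPerp b' i.val (b' i) = projPerp b i.val (b i)
    rw [hb'lt i hi]
    exact projPerp_congr (hSlow i.val hi.le) _
  have hbsHigh : ∀ i : Fin n, k + 1 < i.val → bstar b' i = bstar b i := by
    intro i hi
    show projPerp b' i.val (b' i) = projPerp b i.val (b i)
    rw [hb'gt i hi]
    exact projPerp_congr (hShigh i.val hi) _
  -- the two Gram–Schmidt vectors at positions k, k+1
  set u := projPerp b k (b k0) with hudef
  set v := projPerp b k (b k1) with hvdef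
  have hu0 : u ≠ 0 := bstar_ne_zero hLI k0
  have hv0 : v ≠ 0 := by
    intro h
    exact hLI.notMem_span_image (s := {i : Fin n | (i : ℕ) < k}) (x := k1)
      (by simp [hk1def]) (projPerp_eq_zero_iff.1 h)
  have huspec := projPerp_spec b k (b k0)
  have hvspec := projPerp_spec b k (b k1)
  rw [← hudef] at huspec
  rw [← hvdef] at hvspec
  have hsetk1 : {i : Fin n | (i : ℕ) < k + 1} = {i : Fin n | (i : ℕ) < k} ∪ {k0} := by
    ext i
    simp [hk0def, Fin.ext_iff]
    omega
  have hset1 : b '' {i : Fin n | (i : ℕ) < k + 1} = (b '' {i : Fin n | (i : ℕ) < k}) ∪ {b k0} := by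
    rw [hsetk1, Set.image_union, Set.image_singleton]
  have hset2 : b' '' {i : Fin n | (i : ℕ) < k + 1}
      = (b '' {i : Fin n | (i : ℕ) < k}) ∪ {b k1} := by
    rw [hsetk1, Set.image_union, Set.image_singleton, hb'k0, hSlow k le_rfl]
  have hw_eq : bstar b k1 = v - ((inner ℝ v u : ℝ) / (inner ℝ u u : ℝ)) • u := by
    have h := gs_key (x := b k0) (y := b k1) huspec.1 huspec.2 hu0 hvspec.1 hvspec.2
    show projPerp b (k + 1) (b k1) = _
    apply projPerp_eq
    · rw [hset1]; exact h.1
    · rw [hset1]; exact h.2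
  have hw'_eq : bstar b' k1 = u - ((inner ℝ u v : ℝ) / (inner ℝ v v : ℝ)) • v := by
    have h := gs_key (x := b k1) (y := b k0) hvspec.1 hvspec.2 hv0 huspec.1 huspec.2
    show projPerp b' (k + 1) (b' k1) = _
    rw [hb'k1]
    apply projPerp_eq
    · rw [hset2]; exact h.1
    · rw [hset2]; exact h.2
  have hv'k0 : bstar b' k0 = v := by
    show projPerp b' k (b' k0) = v
    rw [hb'k0, hvdef]
    exact projPerp_congr (hSlow k le_rfl) _
  -- invariance of the product of the two Gram–Schmidt norms
  have hnu : ‖u‖ ≠ 0 := norm_ne_zero_iff.2 hu0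
  have hnv : ‖v‖ ≠ 0 := norm_ne_zero_iff.2 hv0
  have hprod : ‖v‖ ^ 2 * ‖bstar b' k1‖ ^ 2 = ‖u‖ ^ 2 * ‖bstar b k1‖ ^ 2 := by
    have hA : (inner ℝ u u : ℝ) = ‖u‖ ^ 2 := real_inner_self_eq_norm_sq u
    have hB : (inner ℝ v v : ℝ) = ‖v‖ ^ 2 := real_inner_self_eq_norm_sq v
    have hC : (inner ℝ u v : ℝ) = (inner ℝ v u : ℝ) := real_inner_comm v u
    rw [hw_eq, hw'_eq, norm_sub_sq_real, norm_sub_sq_real, real_inner_smul_right,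
      real_inner_smul_right, norm_smul, norm_smul, hA, hB, hC, mul_pow, mul_pow]
    simp only [Real.norm_eq_abs, sq_abs]
    set C := (inner ℝ v u : ℝ) with hCdef
    field_simp
  -- split the potentials
  have hPotsplit : ∀ c : Fin n → EuclideanSpace ℝ (Fin m),
      Pot c = ‖bstar c k0‖ ^ (2 * (n - k)) * (‖bstar c k1‖ ^ (2 * (n - (k + 1)))
        * ∏ i ∈ (Finset.univ.erase k0).erase k1, ‖bstar c i‖ ^ (2 * (n - i.val))) := by
    intro c
    rw [Pot, ← Finset.mul_prod_erase _ _ (Finset.mem_univ k0),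
      ← Finset.mul_prod_erase _ _ (Finset.mem_erase.2 ⟨hk10, Finset.mem_univ k1⟩)]
  have hfin : ∀ i ∈ (Finset.univ.erase k0).erase k1,
      ‖bstar b' i‖ ^ (2 * (n - i.val)) = ‖bstar b i‖ ^ (2 * (n - i.val)) := by
    intro i hi
    have h1 : i ≠ k1 := (Finset.mem_erase.1 hi).1
    have h2 : i ≠ k0 := (Finset.mem_erase.1 (Finset.mem_erase.1 hi).2).1
    have h1' : i.val ≠ k + 1 := fun hh => h1 (Fin.ext hh)
    have h2' : i.val ≠ k := fun hh => h2 (Fin.ext hh)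
    rcases Nat.lt_or_ge i.val k with h | h
    · rw [hbsLow i h]
    · rw [hbsHigh i (by omega)]
  rw [hPotsplit b', hPotsplit b, Finset.prod_congr rfl hfin, hv'k0]
  have hbk0 : bstar b k0 = u := rfl
  rw [hbk0]
  set P : ℝ := ∏ i ∈ (Finset.univ.erase k0).erase k1, ‖bstar b i‖ ^ (2 * (n - i.val)) with hPdef
  set w : ℝ := ‖bstar b k1‖ with hwdef
  set w' : ℝ := ‖bstar b' k1‖ with hw'def
  have he : n - k = (n - (k + 1)) + 1 := by omega
  rw [he]
  set e := n - (k + 1) with hedef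
  have h2e : ∀ x : ℝ, x ^ (2 * (e + 1)) = x ^ 2 * (x ^ 2) ^ e := by
    intro x
    rw [pow_mul, pow_succ]
    ring
  have h2e' : ∀ x : ℝ, x ^ (2 * e) = (x ^ 2) ^ e := fun x => pow_mul x 2 e
  rw [h2e, h2e, h2e', h2e']
  have hpe : (‖v‖ ^ 2) ^ e * (w' ^ 2) ^ e = (‖u‖ ^ 2) ^ e * (w ^ 2) ^ e := by
    rw [← mul_pow (‖v‖ ^ 2) (w' ^ 2) e, ← mul_pow (‖u‖ ^ 2) (w ^ 2) e, hprod]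
  field_simp
  linear_combination P * hpe
end

section
/- For δ ∈ (4^{−1/(n−1)}, 1], every δ-DeepLLL reduced basis B of rank n is δ^{n−1}-PotLLL reduced. Concretely: if B is size-reduced and δ·‖π_k(b_k)‖² ≤ ‖π_k(b_ℓ)‖² holds for all 1 ≤ k < ℓ ≤ n, then δ^{n−1}·Pot(B) ≤ Pot(σ_{k,ℓ} B) for all 1 ≤ k < ℓ ≤ n. -/
set_option maxHeartbeats 1000000

open Finset

/-! ### Auxiliary geometry lemmas -/

lemma orthProj_congr {m : ℕ} {S S' : Submodule ℝ (EuclideanSpace ℝ (Fin m))} (h : S = S')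
    (x : EuclideanSpace ℝ (Fin m)) :
    (Submodule.orthogonalProjectionOnto S x : EuclideanSpace ℝ (Fin m))
      = (Submodule.orthogonalProjectionOnto S' x : EuclideanSpace ℝ (Fin m)) := by
  subst h; rfl

lemma sup_singleton_eq_sup_perp {m : ℕ} (S : Submodule ℝ (EuclideanSpace ℝ (Fin m)))
    (w : EuclideanSpace ℝ (Fin m)) :
    S ⊔ (ℝ ∙ w) = S ⊔ (ℝ ∙ (w - (Submodule.orthogonalProjectionOnto S w : EuclideanSpace ℝ (Fin m)))) := by
  set pw := w - (Submodule.orthogonalProjectionOnto S w : EuclideanSpace ℝ (Fin m)) with hpw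
  apply le_antisymm
  · apply sup_le le_sup_left
    rw [Submodule.span_singleton_le_iff_mem]
    have : w = (Submodule.orthogonalProjectionOnto S w : EuclideanSpace ℝ (Fin m)) + pw := by rw [hpw]; abel
    rw [this]
    exact Submodule.add_mem _ (Submodule.mem_sup_left (Submodule.orthogonalProjectionOnto S w).2)
      (Submodule.mem_sup_right (Submodule.mem_span_singleton_self _))
  · apply sup_le le_sup_left
    rw [Submodule.span_singleton_le_iff_mem, hpw]
    exact Submodule.sub_mem _ (Submodule.mem_sup_right (Submodule.mem_span_singleton_self _))
      (Submodule.mem_sup_left (Submodule.orthogonalProjectionOnto S w).2)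

lemma proj_sup_singleton {m : ℕ} (S : Submodule ℝ (EuclideanSpace ℝ (Fin m)))
    (v w : EuclideanSpace ℝ (Fin m))
    (hw : w - (Submodule.orthogonalProjectionOnto S w : EuclideanSpace ℝ (Fin m)) ≠ 0) :
    (Submodule.orthogonalProjectionOnto (S ⊔ (ℝ ∙ w)) v : EuclideanSpace ℝ (Fin m))
      = (Submodule.orthogonalProjectionOnto S v : EuclideanSpace ℝ (Fin m))
        + ((inner ℝ (w - (Submodule.orthogonalProjectionOnto S w : EuclideanSpace ℝ (Fin m))) v : ℝ)
            / ‖w - (Submodule.orthogonalProjectionOnto S w : EuclideanSpace ℝ (Fin m))‖ ^ 2)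
          • (w - (Submodule.orthogonalProjectionOnto S w : EuclideanSpace ℝ (Fin m))) := by
  set pw := w - (Submodule.orthogonalProjectionOnto S w : EuclideanSpace ℝ (Fin m)) with hpw
  have hpwS : pw ∈ Sᗮ := S.sub_starProjection_mem_orthogonal w
  have hnorm : ‖pw‖ ≠ 0 := norm_ne_zero_iff.mpr hw
  rw [orthProj_congr (sup_singleton_eq_sup_perp S w), ← hpw]
  apply Submodule.eq_starProjection_of_mem_of_inner_eq_zero
  · exact Submodule.add_mem _ (Submodule.mem_sup_left (Submodule.orthogonalProjectionOnto S v).2)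
      (Submodule.mem_sup_right (Submodule.smul_mem _ _ (Submodule.mem_span_singleton_self _)))
  · intro z hz
    rcases Submodule.mem_sup.1 hz with ⟨s, hs, t, ht, rfl⟩
    rcases Submodule.mem_span_singleton.1 ht with ⟨c, rfl⟩
    have h1 : (inner ℝ (v - (Submodule.orthogonalProjectionOnto S v : EuclideanSpace ℝ (Fin m))) s : ℝ) = 0 :=
      Submodule.starProjection_inner_eq_zero v s hs
    have h2 : (inner ℝ pw s : ℝ) = 0 := by
      rw [real_inner_comm]; exact hpwS s hs
    have h3 : (inner ℝ (Submodule.orthogonalProjectionOnto S v : EuclideanSpace ℝ (Fin m)) pw : ℝ) = 0 := by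
      rw [real_inner_comm]
      exact (Submodule.mem_orthogonal' S pw).1 hpwS _ (Submodule.orthogonalProjectionOnto S v).2
    have h1' : (inner ℝ v s : ℝ)
        = (inner ℝ (Submodule.orthogonalProjectionOnto S v : EuclideanSpace ℝ (Fin m)) s : ℝ) := by
      rw [inner_sub_left, sub_eq_zero] at h1; exact h1
    have hself : (inner ℝ pw pw : ℝ) = ‖pw‖ ^ 2 := real_inner_self_eq_norm_sq pw
    simp only [inner_sub_left, inner_add_left, inner_add_right, inner_smul_left, inner_smul_right,
      RCLike.star_def, starRingEnd_apply, star_trivial]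
    rw [h1', h2, h3, hself, real_inner_comm v pw]
    field_simp
    ring

lemma normsq_perp_sup {m : ℕ} (S : Submodule ℝ (EuclideanSpace ℝ (Fin m)))
    (v w : EuclideanSpace ℝ (Fin m))
    (hw : w - (Submodule.orthogonalProjectionOnto S w : EuclideanSpace ℝ (Fin m)) ≠ 0) :
    ‖v - (Submodule.orthogonalProjectionOnto (S ⊔ (ℝ ∙ w)) v : EuclideanSpace ℝ (Fin m))‖ ^ 2
        * ‖w - (Submodule.orthogonalProjectionOnto S w : EuclideanSpace ℝ (Fin m))‖ ^ 2
      = ‖v - (Submodule.orthogonalProjectionOnto S v : EuclideanSpace ℝ (Fin m))‖ ^ 2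
          * ‖w - (Submodule.orthogonalProjectionOnto S w : EuclideanSpace ℝ (Fin m))‖ ^ 2
        - (inner ℝ (v - (Submodule.orthogonalProjectionOnto S v : EuclideanSpace ℝ (Fin m)))
            (w - (Submodule.orthogonalProjectionOnto S w : EuclideanSpace ℝ (Fin m))) : ℝ) ^ 2 := by
  set pw := w - (Submodule.orthogonalProjectionOnto S w : EuclideanSpace ℝ (Fin m)) with hpw
  set pv := v - (Submodule.orthogonalProjectionOnto S v : EuclideanSpace ℝ (Fin m)) with hpv
  have hnorm : ‖pw‖ ≠ 0 := norm_ne_zero_iff.mpr hw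
  have h3 : (inner ℝ (Submodule.orthogonalProjectionOnto S v : EuclideanSpace ℝ (Fin m)) pw : ℝ) = 0 := by
    rw [real_inner_comm]
    exact (Submodule.mem_orthogonal' S pw).1 (S.sub_starProjection_mem_orthogonal w) _
      (Submodule.orthogonalProjectionOnto S v).2
  have hvw : (inner ℝ pw v : ℝ) = (inner ℝ pv pw : ℝ) := by
    rw [real_inner_comm, hpv, inner_sub_left, h3, sub_zero]
  have key : v - (Submodule.orthogonalProjectionOnto (S ⊔ (ℝ ∙ w)) v : EuclideanSpace ℝ (Fin m))
      = pv - ((inner ℝ pv pw : ℝ) / ‖pw‖ ^ 2) • pw := by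
    rw [proj_sup_singleton S v w hw, ← hpw, hvw, sub_add_eq_sub_sub, ← hpv]
  rw [key, norm_sub_sq_real, inner_smul_right, norm_smul, mul_pow, Real.norm_eq_abs, sq_abs]
  field_simp
  ring

lemma normsq_perp_exchange {m : ℕ} (S : Submodule ℝ (EuclideanSpace ℝ (Fin m)))
    (v w : EuclideanSpace ℝ (Fin m))
    (hv : v - (Submodule.orthogonalProjectionOnto S v : EuclideanSpace ℝ (Fin m)) ≠ 0)
    (hw : w - (Submodule.orthogonalProjectionOnto S w : EuclideanSpace ℝ (Fin m)) ≠ 0) :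
    ‖v - (Submodule.orthogonalProjectionOnto (S ⊔ (ℝ ∙ w)) v : EuclideanSpace ℝ (Fin m))‖ ^ 2
        * ‖w - (Submodule.orthogonalProjectionOnto S w : EuclideanSpace ℝ (Fin m))‖ ^ 2
      = ‖w - (Submodule.orthogonalProjectionOnto (S ⊔ (ℝ ∙ v)) w : EuclideanSpace ℝ (Fin m))‖ ^ 2
        * ‖v - (Submodule.orthogonalProjectionOnto S v : EuclideanSpace ℝ (Fin m))‖ ^ 2 := by
  rw [normsq_perp_sup S v w hw, normsq_perp_sup S w v hv, real_inner_comm]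
  ring

/-! ### Combinatorial lemmas about `insertFam` -/

lemma insertFam_image_le {n : ℕ} {α : Type*} (b : Fin n → α) (k l : Fin n)
    {i : ℕ} (hi : i ≤ k.val) :
    insertFam b k l '' {j : Fin n | (j : ℕ) < i} = b '' {j : Fin n | (j : ℕ) < i} := by
  apply Set.image_congr
  intro j hj
  simp only [Set.mem_setOf_eq] at hj
  unfold insertFam
  rw [if_pos (Or.inl (lt_of_lt_of_le hj hi))]

lemma insertFam_image_gt {n : ℕ} {α : Type*} (b : Fin n → α) (k l : Fin n) (hkl : k < l)
    {i : ℕ} (hi : l.val < i) :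
    insertFam b k l '' {j : Fin n | (j : ℕ) < i} = b '' {j : Fin n | (j : ℕ) < i} := by
  have hkl' : k.val < l.val := hkl
  ext x
  simp only [Set.mem_image, Set.mem_setOf_eq]
  constructor
  · rintro ⟨j, hj, rfl⟩
    by_cases h1 : j.val < k.val ∨ l.val < j.val
    · exact ⟨j, hj, by unfold insertFam; rw [if_pos h1]⟩
    · by_cases h2 : j = k
      · exact ⟨l, hi, by unfold insertFam; rw [if_neg h1, if_pos h2]⟩
      · refine ⟨⟨j.val - 1, lt_of_le_of_lt (Nat.sub_le _ _) j.isLt⟩, by simp; omega, ?_⟩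
        unfold insertFam
        rw [if_neg h1, if_neg h2]
  · rintro ⟨j, hj, rfl⟩
    by_cases h1 : j.val < k.val ∨ l.val < j.val
    · exact ⟨j, hj, by unfold insertFam; rw [if_pos h1]⟩
    · push_neg at h1
      by_cases h2 : j = l
      · refine ⟨k, by omega, ?_⟩
        unfold insertFam
        rw [if_neg (by omega), if_pos rfl, h2]
      · have hjl : j.val < l.val := lt_of_le_of_ne h1.2 (fun h => h2 (Fin.ext h))
        refine ⟨⟨j.val + 1, by omega⟩, by simp; omega, ?_⟩
        unfold insertFam
        rw [if_neg (by simp; omega), if_neg (by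
          intro h
          have : j.val + 1 = k.val := congrArg Fin.val h
          omega)]
        congr 1

lemma insertFam_image_mid {n : ℕ} {α : Type*} (b : Fin n → α) (k l : Fin n) (hkl : k < l)
    {i : ℕ} (h1 : k.val ≤ i) (h2 : i ≤ l.val) (hin : i < n) :
    insertFam b k l '' {j : Fin n | (j : ℕ) < i + 1}
      = b '' {j : Fin n | (j : ℕ) < i} ∪ {b l} := by
  have hkl' : k.val < l.val := hkl
  ext x
  simp only [Set.mem_image, Set.mem_setOf_eq, Set.mem_union, Set.mem_singleton_iff]
  constructor
  · rintro ⟨j, hj, rfl⟩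
    by_cases hc1 : j.val < k.val ∨ l.val < j.val
    · have hjk : j.val < k.val := by omega
      exact Or.inl ⟨j, by omega, by unfold insertFam; rw [if_pos hc1]⟩
    · by_cases hc2 : j = k
      · exact Or.inr (by unfold insertFam; rw [if_neg hc1, if_pos hc2])
      · push_neg at hc1
        have hjk : k.val < j.val := lt_of_le_of_ne hc1.1 (fun h => hc2 (Fin.ext h.symm))
        refine Or.inl ⟨⟨j.val - 1, lt_of_le_of_lt (Nat.sub_le _ _) j.isLt⟩, by simp; omega, ?_⟩
        unfold insertFam
        rw [if_neg (by push_neg; exact hc1), if_neg hc2]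
  · rintro (⟨j, hj, rfl⟩ | rfl)
    · by_cases hc1 : j.val < k.val
      · exact ⟨j, by omega, by unfold insertFam; rw [if_pos (Or.inl hc1)]⟩
      · refine ⟨⟨j.val + 1, by omega⟩, by simp; omega, ?_⟩
        unfold insertFam
        rw [if_neg (by simp; omega), if_neg (by
          intro h
          have : j.val + 1 = k.val := congrArg Fin.val h
          omega)]
        congr 1
    · exact ⟨k, by omega, by unfold insertFam; rw [if_neg (by omega), if_pos rfl]⟩

lemma image_lt_succ {n : ℕ} {α : Type*} (b : Fin n → α) {i : ℕ} (hin : i < n) :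
    b '' {j : Fin n | (j : ℕ) < i + 1} = b '' {j : Fin n | (j : ℕ) < i} ∪ {b ⟨i, hin⟩} := by
  have h : {j : Fin n | (j : ℕ) < i + 1} = {j : Fin n | (j : ℕ) < i} ∪ {(⟨i, hin⟩ : Fin n)} := by
    ext j
    simp only [Set.mem_setOf_eq, Set.mem_union, Set.mem_singleton_iff, Fin.ext_iff]
    omega
  rw [h, Set.image_union, Set.image_singleton]

lemma projPerp_ne_zero {n m : ℕ} {b : Fin n → EuclideanSpace ℝ (Fin m)}
    (hLI : LinearIndependent ℝ b) {i : ℕ} (t : Fin n) (ht : i ≤ t.val) :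
    projPerp b i (b t) ≠ 0 := by
  intro h
  unfold projPerp at h
  rw [sub_eq_zero] at h
  have hmem : b t ∈ Submodule.span ℝ (b '' {j : Fin n | (j : ℕ) < i}) := by
    rw [h]
    exact (Submodule.orthogonalProjectionOnto _ (b t)).2
  exact hLI.notMem_span_image (by simp only [Set.mem_setOf_eq]; omega) hmem

lemma Pot_eq_prod_range {n m : ℕ} (d : Fin n → EuclideanSpace ℝ (Fin m)) :
    Pot d = ∏ j ∈ range n, (if h : j < n then ‖bstar d ⟨j, h⟩‖ ^ (2 * (n - j)) else 1) := by
  rw [Pot, ← Fin.prod_univ_eq_prod_range]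
  apply Finset.prod_congr rfl
  intro i _
  rw [dif_pos i.isLt]

/-- for δ ∈ (4^{-1/(n-1)}, 1], a δ-DeepLLL reduced basis is δ^{n-1}-PotLLL reduced. -/
theorem deepLLL_is_potLLL {n m : ℕ} (b : Fin n → EuclideanSpace ℝ (Fin m))
    (hLI : LinearIndependent ℝ b) (δ : ℝ)
    (hδ1 : (4 : ℝ) ^ (-(1 : ℝ) / ((n : ℝ) - 1)) < δ) (hδ2 : δ ≤ 1)
    (hsize : SizeReduced b)
    (hdeep : ∀ k l : Fin n, k < l →
      δ * ‖projPerp b k.val (b k)‖ ^ 2 ≤ ‖projPerp b k.val (b l)‖ ^ 2) :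
    ∀ k l : Fin n, k < l → δ ^ (n - 1) * Pot b ≤ Pot (insertFam b k l) := by
  intro k l hkl
  have hKL : k.val < l.val := hkl
  have hLn : l.val < n := l.isLt
  have hδ0 : (0 : ℝ) < δ := lt_trans (Real.rpow_pos_of_pos (by norm_num) _) hδ1
  set c : Fin n → EuclideanSpace ℝ (Fin m) := insertFam b k l with hc
  set NN : ℕ → ℝ := fun j => ‖projPerp b j (b l)‖ ^ 2 with hNN
  set BB : ℕ → ℝ := fun j => if h : j < n then ‖projPerp b j (b ⟨j, h⟩)‖ ^ 2 else 1 with hBB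
  set fc : ℕ → ℝ := fun j => if h : j < n then ‖bstar c ⟨j, h⟩‖ ^ (2 * (n - j)) else 1 with hfc
  set fb : ℕ → ℝ := fun j => if h : j < n then ‖bstar b ⟨j, h⟩‖ ^ (2 * (n - j)) else 1 with hfb
  -- positivity
  have hBstar_ne : ∀ i : Fin n, bstar b i ≠ 0 := fun i => projPerp_ne_zero hLI i le_rfl
  have hBBpos : ∀ j, 0 < BB j := by
    intro j
    simp only [hBB]
    split
    · exact pow_pos (norm_pos_iff.mpr (projPerp_ne_zero hLI ⟨j, by assumption⟩ le_rfl)) 2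
    · norm_num
  have hNNpos : ∀ j, j ≤ l.val → 0 < NN j := fun j hj =>
    pow_pos (norm_pos_iff.mpr (projPerp_ne_zero hLI l hj)) 2
  have hPotb_pos : 0 < Pot b := by
    rw [Pot]
    exact Finset.prod_pos fun i _ => pow_pos (norm_pos_iff.mpr (hBstar_ne i)) _
  -- Pot as range products
  have hPotc : Pot c = ∏ j ∈ range n, fc j := by
    rw [Pot_eq_prod_range]
  have hPotb : Pot b = ∏ j ∈ range n, fb j := by
    rw [Pot_eq_prod_range]
  -- (F1) outside the window, the Gram-Schmidt vectors agree
  have hfc_out : ∀ j, j < k.val ∨ l.val < j → fc j = fb j := by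
    intro j hj
    simp only [hfc, hfb]
    by_cases h : j < n
    · rw [dif_pos h, dif_pos h]
      have hcb : c ⟨j, h⟩ = b ⟨j, h⟩ := by
        rw [hc]; unfold insertFam
        rw [if_pos (by simp only [Fin.val_mk]; omega)]
      have himg : insertFam b k l '' {t : Fin n | (t : ℕ) < j} = b '' {t : Fin n | (t : ℕ) < j} := by
        rcases hj with hj | hj
        · exact insertFam_image_le b k l (le_of_lt hj)
        · exact insertFam_image_gt b k l hkl hj
      have : bstar c ⟨j, h⟩ = bstar b ⟨j, h⟩ := by
        unfold bstar projPerp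
        rw [hcb, orthProj_congr (congrArg (Submodule.span ℝ) himg)]
      rw [this]
    · rw [dif_neg h, dif_neg h]
  -- (F2) the value at position k
  have hfcK : fc k.val = NN k.val ^ (n - k.val) := by
    have hKn : k.val < n := by omega
    simp only [hfc, hNN]
    rw [dif_pos hKn]
    have hck : c ⟨k.val, hKn⟩ = b l := by
      rw [hc]; unfold insertFam
      rw [if_neg (by simp; omega), if_pos (Fin.ext rfl)]
    have himg : insertFam b k l '' {t : Fin n | (t : ℕ) < k.val}
        = b '' {t : Fin n | (t : ℕ) < k.val} := insertFam_image_le b k l le_rfl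
    have hbs : bstar c ⟨k.val, hKn⟩ = projPerp b k.val (b l) := by
      unfold bstar projPerp
      rw [hck, orthProj_congr (congrArg (Submodule.span ℝ) himg)]
    rw [hbs, pow_mul]
  -- (F3) the exchange relation in the window
  have hmid : ∀ i, k.val ≤ i → i < l.val →
      fc (i + 1) * NN i ^ (n - (i + 1)) = (BB i * NN (i + 1)) ^ (n - (i + 1)) := by
    intro i hKi hiL
    have hin : i < n := by omega
    have hi1n : i + 1 < n := by omega
    have hci : c ⟨i + 1, hi1n⟩ = b ⟨i, hin⟩ := by
      rw [hc]; unfold insertFam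
      rw [if_neg (by simp; omega), if_neg (by
        intro h
        have : i + 1 = k.val := congrArg Fin.val h
        omega)]
      exact congrArg b (Fin.ext (by simp))
    have hspanc : Submodule.span ℝ (insertFam b k l '' {t : Fin n | (t : ℕ) < i + 1})
        = Submodule.span ℝ (b '' {t : Fin n | (t : ℕ) < i}) ⊔ (ℝ ∙ (b l)) := by
      rw [insertFam_image_mid b k l hkl hKi (le_of_lt hiL) hin, Submodule.span_union]
    have hspanb : Submodule.span ℝ (b '' {t : Fin n | (t : ℕ) < i + 1})
        = Submodule.span ℝ (b '' {t : Fin n | (t : ℕ) < i}) ⊔ (ℝ ∙ (b ⟨i, hin⟩)) := by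
      rw [image_lt_succ b hin, Submodule.span_union]
    have hv : b ⟨i, hin⟩ - (Submodule.orthogonalProjectionOnto
        (Submodule.span ℝ (b '' {t : Fin n | (t : ℕ) < i})) (b ⟨i, hin⟩)
          : EuclideanSpace ℝ (Fin m)) ≠ 0 := projPerp_ne_zero hLI ⟨i, hin⟩ le_rfl
    have hw : b l - (Submodule.orthogonalProjectionOnto
        (Submodule.span ℝ (b '' {t : Fin n | (t : ℕ) < i})) (b l)
          : EuclideanSpace ℝ (Fin m)) ≠ 0 := projPerp_ne_zero hLI l (by omega)
    have key : ‖bstar c ⟨i + 1, hi1n⟩‖ ^ 2 * NN i = BB i * NN (i + 1) := by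
      simp only [hNN, hBB]
      rw [dif_pos hin]
      unfold bstar projPerp
      rw [hci, orthProj_congr hspanc, orthProj_congr hspanb]
      rw [normsq_perp_exchange _ _ _ hv hw]
      ring
    calc fc (i + 1) * NN i ^ (n - (i + 1))
        = (‖bstar c ⟨i + 1, hi1n⟩‖ ^ 2) ^ (n - (i + 1)) * NN i ^ (n - (i + 1)) := by
          simp only [hfc]; rw [dif_pos hi1n, pow_mul]
      _ = (‖bstar c ⟨i + 1, hi1n⟩‖ ^ 2 * NN i) ^ (n - (i + 1)) := (mul_pow _ _ _).symm
      _ = (BB i * NN (i + 1)) ^ (n - (i + 1)) := by rw [key]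
  -- telescoping induction over the window
  have hind : ∀ i, k.val ≤ i → i ≤ l.val →
      ∏ j ∈ Ico k.val (i + 1), fc j
        = (∏ j ∈ Ico k.val i, (NN j * BB j ^ (n - j - 1))) * NN i ^ (n - i) := by
    intro i hKi
    induction i, hKi using Nat.le_induction with
    | base =>
      intro _
      rw [Nat.Ico_succ_singleton, Finset.prod_singleton, Finset.Ico_self, Finset.prod_empty,
        one_mul, hfcK]
    | succ i hKi ih =>
      intro hiL1
      have hiL : i < l.val := by omega
      have H := ih (by omega)
      rw [Finset.prod_Ico_succ_top (by omega : k.val ≤ i + 1), H,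
        Finset.prod_Ico_succ_top (by omega : k.val ≤ i)]
      have e1 := hmid i (by omega) hiL
      rw [mul_pow] at e1
      have e2 : NN i ^ (n - i) = NN i ^ (n - (i + 1)) * NN i := by
        rw [← pow_succ]
        congr 1
        omega
      have e3 : n - i - 1 = n - (i + 1) := by omega
      rw [e2, e3]
      linear_combination (∏ j ∈ Ico k.val i, (NN j * BB j ^ (n - j - 1))) * NN i * e1
  have hmidc := hind l.val (le_of_lt hKL) le_rfl
  have hNL : NN l.val = BB l.val := by
    simp only [hNN, hBB]
    rw [dif_pos hLn]
  -- splitting the full products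
  have hsplit : ∀ f : ℕ → ℝ,
      ((∏ j ∈ Ico 0 k.val, f j) * (∏ j ∈ Ico k.val (l.val + 1), f j))
        * (∏ j ∈ Ico (l.val + 1) n, f j) = ∏ j ∈ range n, f j := by
    intro f
    rw [Finset.prod_Ico_consecutive f (Nat.zero_le _) (by omega),
      Finset.prod_Ico_consecutive f (Nat.zero_le _) (by omega), Finset.range_eq_Ico]
  have hout1 : ∏ j ∈ Ico 0 k.val, fc j = ∏ j ∈ Ico 0 k.val, fb j :=
    Finset.prod_congr rfl fun j hj => hfc_out j (Or.inl (Finset.mem_Ico.1 hj).2)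
  have hout2 : ∏ j ∈ Ico (l.val + 1) n, fc j = ∏ j ∈ Ico (l.val + 1) n, fb j :=
    Finset.prod_congr rfl fun j hj => hfc_out j (Or.inr (by
      have := (Finset.mem_Ico.1 hj).1; omega))
  have hfbmid : ∀ j, j < n → fb j = BB j ^ (n - j) := by
    intro j hjn
    simp only [hfb, hBB]
    rw [dif_pos hjn, dif_pos hjn, pow_mul]
    rfl
  have h6 : ∏ j ∈ Ico k.val (l.val + 1), fb j
      = (∏ j ∈ Ico k.val l.val, BB j ^ (n - j)) * BB l.val ^ (n - l.val) := by
    rw [Finset.prod_Ico_succ_top (le_of_lt hKL), hfbmid l.val hLn]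
    congr 1
    exact Finset.prod_congr rfl fun j hj => hfbmid j (by
      have := (Finset.mem_Ico.1 hj).2; omega)
  have e4 : (∏ j ∈ Ico k.val l.val, (NN j * BB j ^ (n - j - 1))) * (∏ j ∈ Ico k.val l.val, BB j)
      = (∏ j ∈ Ico k.val l.val, NN j) * (∏ j ∈ Ico k.val l.val, BB j ^ (n - j)) := by
    rw [← Finset.prod_mul_distrib, ← Finset.prod_mul_distrib]
    apply Finset.prod_congr rfl
    intro j hj
    rw [Finset.mem_Ico] at hj
    rw [mul_assoc, ← pow_succ]
    congr 2
    omega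
  -- the main identity
  have hmain : Pot c * (∏ j ∈ Ico k.val l.val, BB j)
      = Pot b * (∏ j ∈ Ico k.val l.val, NN j) := by
    rw [hPotc, hPotb, ← hsplit fc, ← hsplit fb, hout1, hout2, hmidc, h6, hNL]
    linear_combination ((∏ j ∈ Ico 0 k.val, fb j) * (∏ j ∈ Ico (l.val + 1) n, fb j)
        * BB l.val ^ (n - l.val)) * e4
  -- the inequality from the deep exchange condition
  have hdeep' : ∀ j ∈ Ico k.val l.val, δ * BB j ≤ NN j := by
    intro j hj
    rw [Finset.mem_Ico] at hj
    have hjn : j < n := by omega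
    have hlt : (⟨j, hjn⟩ : Fin n) < l := hj.2
    have := hdeep ⟨j, hjn⟩ l hlt
    simp only [hNN, hBB]
    rw [dif_pos hjn]
    exact this
  have hBBprod_pos : 0 < ∏ j ∈ Ico k.val l.val, BB j :=
    Finset.prod_pos fun j _ => hBBpos j
  have hineq1 : δ ^ (l.val - k.val) * ∏ j ∈ Ico k.val l.val, BB j
      ≤ ∏ j ∈ Ico k.val l.val, NN j := by
    calc δ ^ (l.val - k.val) * ∏ j ∈ Ico k.val l.val, BB j
        = ∏ j ∈ Ico k.val l.val, (δ * BB j) := by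
          rw [Finset.prod_mul_distrib, Finset.prod_const, Nat.card_Ico]
      _ ≤ ∏ j ∈ Ico k.val l.val, NN j :=
          Finset.prod_le_prod (fun j _ => mul_nonneg hδ0.le (hBBpos j).le) hdeep'
  have h7 : δ ^ (l.val - k.val) * Pot b ≤ Pot c := by
    apply le_of_mul_le_mul_right _ hBBprod_pos
    calc (δ ^ (l.val - k.val) * Pot b) * ∏ j ∈ Ico k.val l.val, BB j
        = Pot b * (δ ^ (l.val - k.val) * ∏ j ∈ Ico k.val l.val, BB j) := by ring
      _ ≤ Pot b * ∏ j ∈ Ico k.val l.val, NN j :=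
          mul_le_mul_of_nonneg_left hineq1 hPotb_pos.le
      _ = Pot c * ∏ j ∈ Ico k.val l.val, BB j := hmain.symm
  have h8 : δ ^ (n - 1) ≤ δ ^ (l.val - k.val) :=
    pow_le_pow_of_le_one hδ0.le hδ2 (by omega)
  calc δ ^ (n - 1) * Pot b ≤ δ ^ (l.val - k.val) * Pot b :=
        mul_le_mul_of_nonneg_right h8 hPotb_pos.le
    _ ≤ Pot c := h7
end

section
/- For the critical basis A_n(α) with α = √(3/4) and 1 ≤ j ≤ i ≤ n, one has ‖π_j(b_i)‖² = α^{2(j−1)}·( (1/4)·∑_{ℓ=0}^{i−j−1} α^{2ℓ} + α^{2(i−j)} ) = α^{2(j−1)} = ‖π_j(b_j)‖². In particular, the rows of A_n(√(3/4)) form a 1-DeepLLL reduced basis. -/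
open Finset

/-- The critical basis A_n(α): lower-triangular, row i (0-based) has diagonal entry α^i and
entries α^j/2 in columns j < i. -/
noncomputable def critA (n : ℕ) (α : ℝ) : Fin n → EuclideanSpace ℝ (Fin n) :=
  fun i => WithLp.toLp 2 (fun j => if j = i then α ^ (i : ℕ)
    else if (j : ℕ) < (i : ℕ) then α ^ (j : ℕ) / 2 else 0 : Fin n → ℝ)

section CritAux
variable {n : ℕ} {α : ℝ}

lemma critA_apply (i s : Fin n) :
    critA n α i s = if s = i then α ^ (i : ℕ)
      else if (s : ℕ) < (i : ℕ) then α ^ (s : ℕ) / 2 else 0 := rfl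

lemma piLp_sum_apply {ι : Type*} (F : Finset ι) (f : ι → EuclideanSpace ℝ (Fin n)) (s : Fin n) :
    (∑ t ∈ F, f t) s = ∑ t ∈ F, f t s := by
  induction F using Finset.cons_induction with
  | empty => rfl
  | cons a F ha ih => rw [Finset.sum_cons, Finset.sum_cons, PiLp.add_apply, ih]

lemma span_coord_zero {j : ℕ} {w : EuclideanSpace ℝ (Fin n)}
    (hw : w ∈ Submodule.span ℝ (critA n α '' {i | (i : ℕ) < j}))
    (t : Fin n) (ht : j ≤ t.val) : w t = 0 := by
  induction hw using Submodule.span_induction with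
  | mem x hx =>
      obtain ⟨i, hi, rfl⟩ := hx
      simp only [Set.mem_setOf_eq] at hi
      have h1 : ¬ (t = i) := by rintro rfl; omega
      have h2 : ¬ ((t : ℕ) < (i : ℕ)) := by omega
      simp [critA_apply, h1, h2]
  | zero => rfl
  | add x y hx hy ihx ihy => rw [PiLp.add_apply, ihx, ihy, add_zero]
  | smul c x hx ihx => rw [PiLp.smul_apply, ihx, smul_zero]

lemma single_mem (hα : α ≠ 0) (j : ℕ) :
    ∀ k, ∀ t : Fin n, t.val = k → t.val < j →
      EuclideanSpace.single t (1:ℝ) ∈ Submodule.span ℝ (critA n α '' {i | (i : ℕ) < j}) := by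
  intro k
  induction k using Nat.strong_induction_on with
  | _ k ih =>
    rintro t rfl htj
    have hb : critA n α t ∈ Submodule.span ℝ (critA n α '' {i | (i : ℕ) < j}) :=
      Submodule.subset_span ⟨t, htj, rfl⟩
    have hsum : critA n α t =
        α ^ (t : ℕ) • EuclideanSpace.single t (1:ℝ) +
        ∑ s ∈ Finset.univ.filter (fun s : Fin n => (s : ℕ) < (t : ℕ)),
          (α ^ (s : ℕ) / 2) • EuclideanSpace.single s (1:ℝ) := by
      ext u
      rw [PiLp.add_apply, PiLp.smul_apply, piLp_sum_apply]
      simp only [PiLp.smul_apply, EuclideanSpace.single_apply, smul_eq_mul, mul_ite, mul_one,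
        mul_zero]
      rw [Finset.sum_ite_eq]
      rw [critA_apply]
      rcases eq_or_ne u t with rfl | hne
      · simp
      · simp [hne, Fin.val_ne_of_ne hne]
    have hmem : α ^ (t : ℕ) • EuclideanSpace.single t (1:ℝ) ∈
        Submodule.span ℝ (critA n α '' {i | (i : ℕ) < j}) := by
      have : α ^ (t : ℕ) • EuclideanSpace.single t (1:ℝ) = critA n α t -
          ∑ s ∈ Finset.univ.filter (fun s : Fin n => (s : ℕ) < (t : ℕ)),
            (α ^ (s : ℕ) / 2) • EuclideanSpace.single s (1:ℝ) := by
        rw [hsum]; abel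
      rw [this]
      refine Submodule.sub_mem _ hb (Submodule.sum_mem _ fun s hs => ?_)
      simp only [Finset.mem_filter] at hs
      exact Submodule.smul_mem _ _ (ih s.val hs.2 s rfl (hs.2.trans htj))
    have : EuclideanSpace.single t (1:ℝ) =
        (α ^ (t : ℕ))⁻¹ • (α ^ (t : ℕ) • EuclideanSpace.single t (1:ℝ)) := by
      rw [smul_smul, inv_mul_cancel₀ (pow_ne_zero _ hα), one_smul]
    rw [this]
    exact Submodule.smul_mem _ _ hmem

lemma projPerp_critA (hα : α ≠ 0) (j : ℕ) (x : EuclideanSpace ℝ (Fin n)) (s : Fin n) :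
    projPerp (critA n α) j x s = if s.val < j then 0 else x s := by
  set p : EuclideanSpace ℝ (Fin n) := WithLp.toLp 2 (fun u => if u.val < j then x u else 0 : Fin n → ℝ) with hpdef
  have hpapp : ∀ u : Fin n, p u = if u.val < j then x u else 0 := fun u => rfl
  have hp : (Submodule.orthogonalProjectionOnto (Submodule.span ℝ (critA n α '' {i | (i : ℕ) < j})) x :
      EuclideanSpace ℝ (Fin n)) = p := by
    rw [Submodule.coe_orthogonalProjectionOnto_apply]
    apply Submodule.eq_starProjection_of_mem_of_inner_eq_zero
    · have hrepr : p =
          ∑ t ∈ Finset.univ.filter (fun t : Fin n => t.val < j),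
            x t • EuclideanSpace.single t (1:ℝ) := by
        ext u
        rw [piLp_sum_apply, hpapp]
        simp only [PiLp.smul_apply, EuclideanSpace.single_apply, smul_eq_mul, mul_ite, mul_one,
          mul_zero]
        rw [Finset.sum_ite_eq]
        simp
      rw [hrepr]
      exact Submodule.sum_mem _ fun t ht => Submodule.smul_mem _ _
        (single_mem hα j t.val t rfl (by simpa using ht))
    · intro w hw
      rw [PiLp.inner_apply]
      refine Finset.sum_eq_zero fun u _ => ?_
      by_cases hu : u.val < j
      · have : (x - p) u = 0 := by rw [PiLp.sub_apply, hpapp]; simp [hu]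
        rw [this]; simp
      · rw [span_coord_zero hw u (le_of_not_gt hu)]; simp
  rw [projPerp, PiLp.sub_apply]
  rw [hp, hpapp]
  by_cases hs : s.val < j <;> simp [hs]

lemma norm_sq_eq (v : EuclideanSpace ℝ (Fin n)) : ‖v‖ ^ 2 = ∑ s, v s ^ 2 := by
  rw [EuclideanSpace.norm_eq, Real.sq_sqrt (by positivity)]
  simp [Real.norm_eq_abs, sq_abs]

lemma key (hα : α ≠ 0) (j i : Fin n) (hji : j ≤ i) :
    ‖projPerp (critA n α) j.val (critA n α i)‖ ^ 2 =
      α ^ (2 * (j : ℕ)) * ((1/4) * ∑ t ∈ Finset.range ((i : ℕ) - (j : ℕ)), α ^ (2 * t) +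
        α ^ (2 * ((i : ℕ) - (j : ℕ)))) := by
  have hji' : (j : ℕ) ≤ (i : ℕ) := hji
  set f : ℕ → ℝ := fun k => (if k < (j : ℕ) then 0 else if k = (i : ℕ) then α ^ (i : ℕ)
    else if k < (i : ℕ) then α ^ k / 2 else 0) with hf
  rw [norm_sq_eq]
  have h1 : ∀ s : Fin n, projPerp (critA n α) j.val (critA n α i) s ^ 2 = f s.val ^ 2 := by
    intro s
    rw [projPerp_critA hα, critA_apply, hf]
    congr 1
    simp only [Fin.ext_iff]
  calc ∑ s : Fin n, projPerp (critA n α) j.val (critA n α i) s ^ 2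
      = ∑ s : Fin n, f s.val ^ 2 := by exact Finset.sum_congr rfl fun s _ => h1 s
    _ = ∑ k ∈ Finset.range n, f k ^ 2 := Fin.sum_univ_eq_sum_range (fun k => f k ^ 2) n
    _ = ∑ k ∈ Finset.range ((i : ℕ) + 1), f k ^ 2 := by
        refine (Finset.sum_subset (Finset.range_subset_range.2 i.isLt) fun k hk hk2 => ?_).symm
        simp only [Finset.mem_range, not_lt] at hk hk2
        have : f k = 0 := by rw [hf]; simp only; rw [if_neg (by omega), if_neg (by omega),
          if_neg (by omega)]
        rw [this]; ring
    _ = ∑ k ∈ Finset.range (i : ℕ), f k ^ 2 + α ^ (2 * (i : ℕ)) := by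
        rw [Finset.sum_range_succ]
        congr 1
        have hfi : f (i : ℕ) = α ^ (i : ℕ) := by
          simp [hf, show ¬((i : ℕ) < (j : ℕ)) from by omega]
        rw [hfi, ← pow_mul]; ring_nf
    _ = ∑ k ∈ Finset.Ico (j : ℕ) (i : ℕ), (α ^ k / 2) ^ 2 + α ^ (2 * (i : ℕ)) := by
        congr 1
        rw [Finset.range_eq_Ico, ← Finset.sum_Ico_consecutive _ (Nat.zero_le (j : ℕ)) hji']
        have hz : ∑ k ∈ Finset.Ico 0 (j : ℕ), f k ^ 2 = 0 := by
          refine Finset.sum_eq_zero fun k hk => ?_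
          simp only [Finset.mem_Ico] at hk
          rw [hf]; simp only; rw [if_pos hk.2]; ring
        rw [hz, zero_add]
        refine Finset.sum_congr rfl fun k hk => ?_
        simp only [Finset.mem_Ico] at hk
        rw [hf]; simp only; rw [if_neg (by omega), if_neg (by omega), if_pos hk.2]
    _ = ∑ t ∈ Finset.range ((i : ℕ) - (j : ℕ)), (α ^ ((j : ℕ) + t) / 2) ^ 2
          + α ^ (2 * (i : ℕ)) := by rw [Finset.sum_Ico_eq_sum_range]
    _ = α ^ (2 * (j : ℕ)) * ((1/4) * ∑ t ∈ Finset.range ((i : ℕ) - (j : ℕ)), α ^ (2 * t) +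
        α ^ (2 * ((i : ℕ) - (j : ℕ)))) := by
        have hterm : ∀ t ∈ Finset.range ((i : ℕ) - (j : ℕ)),
            (α ^ ((j : ℕ) + t) / 2) ^ 2 = α ^ (2 * (j : ℕ)) * ((1/4) * α ^ (2 * t)) := by
          intro t _
          rw [pow_add, mul_comm 2 t, mul_comm 2 (j : ℕ), pow_mul, pow_mul]
          ring
        rw [Finset.sum_congr rfl hterm, ← Finset.mul_sum, ← Finset.mul_sum]
        have h2 : α ^ (2 * (i : ℕ)) = α ^ (2 * (j : ℕ)) * α ^ (2 * ((i : ℕ) - (j : ℕ))) := by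
          rw [← pow_add]; congr 1; omega
        rw [h2]; ring

lemma geom_34 : ∀ k : ℕ, (1/4 : ℝ) * ∑ t ∈ Finset.range k, (3/4 : ℝ) ^ t + (3/4 : ℝ) ^ k = 1 := by
  intro k
  induction k with
  | zero => simp
  | succ k ih =>
    rw [Finset.sum_range_succ, pow_succ]
    nlinarith [ih]

lemma bstar_coord (hα : α ≠ 0) (j s : Fin n) :
    bstar (critA n α) j s = if s = j then α ^ (j : ℕ) else 0 := by
  rw [bstar, projPerp_critA hα, critA_apply]
  rcases eq_or_ne s j with rfl | h
  · simp
  · have hv : (s : ℕ) ≠ (j : ℕ) := Fin.val_ne_of_ne h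
    by_cases hs : (s : ℕ) < (j : ℕ) <;> simp [h, hs]

lemma mu_half (hα : α ≠ 0) (i j : Fin n) (h : j < i) : mu (critA n α) i j = 1/2 := by
  have h1 : (inner ℝ (critA n α i) (bstar (critA n α) j) : ℝ) = α ^ (j : ℕ) / 2 * α ^ (j : ℕ) := by
    rw [PiLp.inner_apply]
    simp only [RCLike.inner_apply, conj_trivial, bstar_coord hα, mul_ite, mul_zero]
    simp only [ite_mul, zero_mul]
    rw [Finset.sum_ite_eq' Finset.univ j fun s => α ^ (j : ℕ) * critA n α i s]
    have : critA n α i j = α ^ (j : ℕ) / 2 := by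
      rw [critA_apply, if_neg (Fin.ne_of_lt h), if_pos (show (j : ℕ) < (i : ℕ) from h)]
    rw [if_pos (Finset.mem_univ _), this]; ring
  have h2 : (inner ℝ (bstar (critA n α) j) (bstar (critA n α) j) : ℝ) =
      α ^ (j : ℕ) * α ^ (j : ℕ) := by
    rw [PiLp.inner_apply]
    simp only [RCLike.inner_apply, conj_trivial, bstar_coord hα, mul_ite, mul_zero]
    rw [Finset.sum_ite_eq' Finset.univ j fun s => (if s = j then α ^ (j:ℕ) else 0) * α ^ (j : ℕ)]
    simp
  rw [mu, h1, h2]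
  have := pow_ne_zero (j : ℕ) hα
  field_simp

lemma key2 {α : ℝ} (hα : α = Real.sqrt (3/4)) (j i : Fin n) (hji : j ≤ i) :
    ‖projPerp (critA n α) j.val (critA n α i)‖ ^ 2 = α ^ (2 * (j : ℕ)) := by
  have hα2 : α ^ 2 = 3/4 := by
    rw [hα]; exact Real.sq_sqrt (by norm_num)
  have hαne : α ≠ 0 := by
    rw [hα]; positivity
  rw [key hαne j i hji]
  have hconv : ∀ t : ℕ, α ^ (2 * t) = (3/4 : ℝ) ^ t := by
    intro t; rw [pow_mul, hα2]
  rw [hconv]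
  have : (1/4 : ℝ) * ∑ t ∈ Finset.range ((i : ℕ) - (j : ℕ)), α ^ (2 * t) +
      α ^ (2 * ((i : ℕ) - (j : ℕ))) = 1 := by
    simp only [hconv]
    exact geom_34 _
  rw [this, mul_one]

end CritAux

/-- for α = √(3/4) and j ≤ i,
‖π_j(b_i)‖² = α^{2(j-1)}((1/4)∑_{ℓ=0}^{i-j-1} α^{2ℓ} + α^{2(i-j)}) = α^{2(j-1)} = ‖π_j(b_j)‖²
(1-based); in particular the rows of A_n(√(3/4)) form a 1-DeepLLL reduced basis. -/
theorem critA_proj_norms (n : ℕ) (α : ℝ) (hα : α = Real.sqrt (3/4)) :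
    (∀ j i : Fin n, j ≤ i →
      ‖projPerp (critA n α) j.val (critA n α i)‖ ^ 2 =
        α ^ (2 * (j : ℕ)) *
          ((1/4) * ∑ t ∈ Finset.range ((i : ℕ) - (j : ℕ)), α ^ (2 * t) +
            α ^ (2 * ((i : ℕ) - (j : ℕ)))) ∧
      ‖projPerp (critA n α) j.val (critA n α i)‖ ^ 2 = α ^ (2 * (j : ℕ)) ∧
      ‖projPerp (critA n α) j.val (critA n α i)‖ ^ 2 =
        ‖projPerp (critA n α) j.val (critA n α j)‖ ^ 2) ∧
    SizeReduced (critA n α) ∧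
    (∀ k l : Fin n, k < l →
      ‖projPerp (critA n α) k.val (critA n α k)‖ ^ 2 ≤
        ‖projPerp (critA n α) k.val (critA n α l)‖ ^ 2) := by
  have hαne : α ≠ 0 := by rw [hα]; positivity
  refine ⟨fun j i hji => ⟨key hαne j i hji, key2 hα j i hji, ?_⟩, fun i j h => ?_, fun k l h => ?_⟩
  · rw [key2 hα j i hji, key2 hα j j le_rfl]
  · rw [mu_half hαne i j h]
    rw [abs_of_nonneg (by norm_num : (0:ℝ) ≤ 1/2)]
  · rw [key2 hα k l (le_of_lt h), key2 hα k k le_rfl]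
end

section
/- A δ-LLL reduced basis B = [b_1,…,b_n] satisfies ‖b_1‖ ≤ (δ − 1/4)^{−(n−1)/4} · vol(L(B))^{1/n}. -/
open Finset

namespace LLLaux

variable {n m : ℕ}

noncomputable def Vsub (b : Fin n → EuclideanSpace ℝ (Fin m)) (j : ℕ) :
    Submodule ℝ (EuclideanSpace ℝ (Fin m)) :=
  Submodule.span ℝ (b '' {i | (i : ℕ) < j})

lemma projPerp_eq (b : Fin n → EuclideanSpace ℝ (Fin m)) (j : ℕ)
    (x y : EuclideanSpace ℝ (Fin m))
    (h1 : x - y ∈ Vsub b j) (h2 : y ∈ (Vsub b j)ᗮ) : projPerp b j x = y := by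
  have h : (Submodule.orthogonalProjectionOnto (Vsub b j) x : EuclideanSpace ℝ (Fin m)) = x - y :=
    Submodule.eq_starProjection_of_mem_orthogonal' h1 h2 (by abel)
  show x - (Submodule.orthogonalProjectionOnto (Vsub b j) x : EuclideanSpace ℝ (Fin m)) = y
  rw [h]; abel

lemma Vsub_mono (b : Fin n → EuclideanSpace ℝ (Fin m)) {j j' : ℕ} (h : j ≤ j') :
    Vsub b j ≤ Vsub b j' :=
  Submodule.span_mono (Set.image_mono (fun i hi => lt_of_lt_of_le hi h))

lemma sub_bstar_mem (b : Fin n → EuclideanSpace ℝ (Fin m)) (i : Fin n) :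
    b i - bstar b i ∈ Vsub b i.val := by
  have h : b i - bstar b i
      = (Submodule.orthogonalProjectionOnto (Vsub b i.val) (b i) : EuclideanSpace ℝ (Fin m)) := by
    simp [bstar, projPerp, Vsub]
    rfl
  rw [h]; exact SetLike.coe_mem _

lemma bstar_mem_orth (b : Fin n → EuclideanSpace ℝ (Fin m)) (i : Fin n) :
    bstar b i ∈ (Vsub b i.val)ᗮ :=
  Submodule.sub_starProjection_mem_orthogonal _

lemma bstar_mem (b : Fin n → EuclideanSpace ℝ (Fin m)) (i : Fin n) :
    bstar b i ∈ Vsub b (i.val + 1) := by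
  have h1 : b i ∈ Vsub b (i.val + 1) :=
    Submodule.subset_span ⟨i, by simp, rfl⟩
  have h2 : b i - bstar b i ∈ Vsub b (i.val + 1) :=
    Vsub_mono b (Nat.le_succ _) (sub_bstar_mem b i)
  have := Submodule.sub_mem _ h1 h2
  simpa using this

lemma inner_bstar_zero (b : Fin n → EuclideanSpace ℝ (Fin m)) {i j : Fin n}
    (h : j.val < i.val) : (inner ℝ (bstar b j) (bstar b i) : ℝ) = 0 := by
  exact bstar_mem_orth b i _ (Vsub_mono b h (bstar_mem b j))

lemma bstar_ne_zero {b : Fin n → EuclideanSpace ℝ (Fin m)}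
    (hLI : LinearIndependent ℝ b) (i : Fin n) : bstar b i ≠ 0 := by
  intro h
  have hmem : b i ∈ Vsub b i.val := by
    have h2 := sub_bstar_mem b i
    rw [h, sub_zero] at h2; exact h2
  exact hLI.notMem_span_image (by simp : i ∉ {i' : Fin n | (i' : ℕ) < i.val}) hmem

lemma bstar_zero {b : Fin n → EuclideanSpace ℝ (Fin m)} (hn : 0 < n) :
    bstar b ⟨0, hn⟩ = b ⟨0, hn⟩ := by
  apply projPerp_eq
  · simpa using (Vsub b 0).zero_mem
  · have h : Vsub b 0 = ⊥ := by
      have : {i : Fin n | (i : ℕ) < 0} = ∅ := by simp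
      simp [Vsub, this]
    rw [h]
    simp


lemma decomp {b : Fin n → EuclideanSpace ℝ (Fin m)} (hLI : LinearIndependent ℝ b)
    (k : ℕ) (hk : k + 1 < n) :
    projPerp b k (b ⟨k + 1, hk⟩) =
      bstar b ⟨k + 1, hk⟩ +
        mu b ⟨k + 1, hk⟩ ⟨k, Nat.lt_of_succ_lt hk⟩ • bstar b ⟨k, Nat.lt_of_succ_lt hk⟩ := by
  set i1 : Fin n := ⟨k + 1, hk⟩
  set i0 : Fin n := ⟨k, Nat.lt_of_succ_lt hk⟩
  set μ : ℝ := mu b i1 i0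
  have hs0 : bstar b i0 ≠ 0 := bstar_ne_zero hLI i0
  have hss : (inner ℝ (bstar b i0) (bstar b i0) : ℝ) ≠ 0 :=
    inner_self_ne_zero.2 hs0
  apply projPerp_eq
  · -- b i1 - (bstar i1 + μ • bstar i0) ∈ Vsub b k
    set w : EuclideanSpace ℝ (Fin m) := b i1 - (bstar b i1 + μ • bstar b i0) with hw
    -- w ∈ Vsub b (k+1)
    have hw1 : w ∈ Vsub b (k + 1) := by
      have h1 : b i1 - bstar b i1 ∈ Vsub b (k + 1) := sub_bstar_mem b i1
      have h2 : bstar b i0 ∈ Vsub b (k + 1) := bstar_mem b i0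
      have : w = (b i1 - bstar b i1) - μ • bstar b i0 := by rw [hw]; abel
      rw [this]
      exact Submodule.sub_mem _ h1 (Submodule.smul_mem _ _ h2)
    -- ⟪w, bstar i0⟫ = 0
    have hworth : (inner ℝ w (bstar b i0) : ℝ) = 0 := by
      have e1 : (inner ℝ (bstar b i1) (bstar b i0) : ℝ) = 0 := by
        rw [real_inner_comm]; exact inner_bstar_zero b (show i0.val < i1.val by simp [i0, i1])
      have e2 : μ * (inner ℝ (bstar b i0) (bstar b i0) : ℝ) = (inner ℝ (b i1) (bstar b i0) : ℝ) := by
        rw [show μ = (inner ℝ (b i1) (bstar b i0) : ℝ) / (inner ℝ (bstar b i0) (bstar b i0) : ℝ) from rfl]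
        exact div_mul_cancel₀ _ hss
      rw [hw]
      rw [inner_sub_left, inner_add_left, real_inner_smul_left]
      rw [e1, e2]
      ring
    -- Vsub (k+1) ≤ Vsub k ⊔ span {bstar i0}
    have hle : Vsub b (k + 1) ≤ Vsub b k ⊔ (ℝ ∙ bstar b i0) := by
      apply Submodule.span_le.2
      rintro _ ⟨j, hj, rfl⟩
      by_cases hjk : (j : ℕ) < k
      · exact Submodule.mem_sup_left (Submodule.subset_span ⟨j, hjk, rfl⟩)
      · have hj' : j = i0 := Fin.ext (by
          show (j : ℕ) = k
          simp only [Set.mem_setOf_eq] at hj; omega)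
        rw [hj']
        have h3 : b i0 = (b i0 - bstar b i0) + bstar b i0 := by abel
        rw [h3]
        exact Submodule.add_mem _
          (Submodule.mem_sup_left (sub_bstar_mem b i0))
          (Submodule.mem_sup_right (Submodule.mem_span_singleton_self _))
    obtain ⟨v, hv, z, hz, hvz⟩ := Submodule.mem_sup.1 (hle hw1)
    obtain ⟨c, rfl⟩ := Submodule.mem_span_singleton.1 hz
    have hc : c = 0 := by
      have h1 : (inner ℝ v (bstar b i0) : ℝ) = 0 :=
        (Submodule.mem_orthogonal _ _).1 (bstar_mem_orth b i0) v hv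
      have h2 : (inner ℝ (v + c • bstar b i0) (bstar b i0) : ℝ)
          = c * (inner ℝ (bstar b i0) (bstar b i0) : ℝ) := by
        rw [inner_add_left, real_inner_smul_left, h1]; ring
      rw [hvz, hworth] at h2
      exact (mul_eq_zero.1 h2.symm).resolve_right hss
    rw [← hvz, hc]
    simpa using hv
  · -- bstar i1 + μ • bstar i0 ∈ (Vsub b k)ᗮ
    apply Submodule.add_mem
    · exact Submodule.orthogonal_le (Vsub_mono b (Nat.le_succ k)) (bstar_mem_orth b i1)
    · exact Submodule.smul_mem _ _ (bstar_mem_orth b i0)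


lemma step {b : Fin n → EuclideanSpace ℝ (Fin m)} (hLI : LinearIndependent ℝ b)
    {δ : ℝ} (hsize : SizeReduced b)
    (hlovasz : ∀ k : ℕ, (hk : k + 1 < n) →
      δ * ‖projPerp b k (b ⟨k, Nat.lt_of_succ_lt hk⟩)‖ ^ 2 ≤
        ‖projPerp b k (b ⟨k + 1, hk⟩)‖ ^ 2)
    (k : ℕ) (hk : k + 1 < n) :
    (δ - 1/4) * ‖bstar b ⟨k, Nat.lt_of_succ_lt hk⟩‖ ^ 2 ≤ ‖bstar b ⟨k + 1, hk⟩‖ ^ 2 := by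
  set i1 : Fin n := ⟨k + 1, hk⟩
  set i0 : Fin n := ⟨k, Nat.lt_of_succ_lt hk⟩
  set μ : ℝ := mu b i1 i0
  have hl := hlovasz k hk
  have hL : projPerp b k (b ⟨k, Nat.lt_of_succ_lt hk⟩) = bstar b i0 := rfl
  rw [hL, decomp hLI k hk] at hl
  have horth : (inner ℝ (bstar b i1) (μ • bstar b i0) : ℝ) = 0 := by
    rw [real_inner_smul_right, real_inner_comm,
      inner_bstar_zero b (show i0.val < i1.val by simp [i0, i1])]
    ring
  have hnorm : ‖bstar b i1 + μ • bstar b i0‖ ^ 2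
      = ‖bstar b i1‖ ^ 2 + μ ^ 2 * ‖bstar b i0‖ ^ 2 := by
    rw [norm_add_sq_real, horth, norm_smul, mul_pow]
    simp [sq_abs]
  rw [hnorm] at hl
  have hμ : |μ| ≤ 1/2 := hsize i1 i0 (by simp [Fin.lt_def, i0, i1])
  have hμ2 : μ ^ 2 ≤ 1/4 := by
    have := abs_nonneg μ
    nlinarith [sq_abs μ]
  nlinarith [sq_nonneg ‖bstar b i0‖, sq_nonneg ‖bstar b i1‖]

lemma chain {b : Fin n → EuclideanSpace ℝ (Fin m)} (hn : 0 < n)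
    (hLI : LinearIndependent ℝ b) {δ : ℝ} (hδ1 : 1/4 < δ) (hsize : SizeReduced b)
    (hlovasz : ∀ k : ℕ, (hk : k + 1 < n) →
      δ * ‖projPerp b k (b ⟨k, Nat.lt_of_succ_lt hk⟩)‖ ^ 2 ≤
        ‖projPerp b k (b ⟨k + 1, hk⟩)‖ ^ 2) :
    ∀ k : ℕ, (hk : k < n) →
      ‖bstar b ⟨0, hn⟩‖ ^ 2 * (δ - 1/4) ^ k ≤ ‖bstar b ⟨k, hk⟩‖ ^ 2 := by
  have hα : 0 < δ - 1/4 := by linarith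
  intro k
  induction k with
  | zero => intro hk; simp
  | succ k ih =>
    intro hk
    have hk' : k < n := Nat.lt_of_succ_lt hk
    calc ‖bstar b ⟨0, hn⟩‖ ^ 2 * (δ - 1/4) ^ (k+1)
        = (‖bstar b ⟨0, hn⟩‖ ^ 2 * (δ - 1/4) ^ k) * (δ - 1/4) := by ring
      _ ≤ ‖bstar b ⟨k, hk'⟩‖ ^ 2 * (δ - 1/4) := by
          exact mul_le_mul_of_nonneg_right (ih hk') hα.le
      _ = (δ - 1/4) * ‖bstar b ⟨k, Nat.lt_of_succ_lt hk⟩‖ ^ 2 := by ring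
      _ ≤ ‖bstar b ⟨k + 1, hk⟩‖ ^ 2 := step hLI hsize hlovasz k hk


lemma final_calc (n : ℕ) (hn : 0 < n) (α P B s2 : ℝ) (hα : 0 < α) (hP : 0 < P) (hB : 0 ≤ B)
    (s : ℕ) (hs2 : (s:ℝ) * 2 = (n:ℝ) * ((n:ℝ)-1))
    (key : B ^ (2*n) * α ^ s ≤ P ^ 2) :
    B ≤ α ^ (-(((n : ℝ) - 1) / 4)) * P ^ ((1 : ℝ) / (n : ℝ)) := by
  have hR : (0:ℝ) ≤ α ^ (-(((n : ℝ) - 1) / 4)) * P ^ ((1 : ℝ) / (n : ℝ)) := by positivity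
  rw [← pow_le_pow_iff_left₀ hB hR (show 2 * n ≠ 0 by omega)]
  have hcast : ((n : ℝ)) ≠ 0 := Nat.cast_ne_zero.2 hn.ne'
  have hrhs : (α ^ (-(((n : ℝ) - 1) / 4)) * P ^ ((1 : ℝ) / (n : ℝ))) ^ (2 * n)
      = (α ^ s)⁻¹ * P ^ 2 := by
    rw [mul_pow, ← Real.rpow_natCast (α ^ (-(((n : ℝ) - 1) / 4))) (2 * n),
      ← Real.rpow_natCast (P ^ ((1 : ℝ) / (n : ℝ))) (2 * n),
      ← Real.rpow_mul hα.le, ← Real.rpow_mul hP.le]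
    have e1 : (-(((n : ℝ) - 1) / 4)) * (((2 * n : ℕ) : ℝ)) = -(s : ℝ) := by
      push_cast
      nlinarith [hs2]
    have e2 : ((1 : ℝ) / (n : ℝ)) * (((2 * n : ℕ) : ℝ)) = ((2 : ℕ) : ℝ) := by
      push_cast
      field_simp
    rw [e1, e2, Real.rpow_neg hα.le, Real.rpow_natCast, Real.rpow_natCast]
  rw [hrhs]
  rw [inv_mul_eq_div, le_div_iff₀ (pow_pos hα s)]
  exact key

end LLLaux

set_option maxHeartbeats 1000000 in
/-- a δ-LLL reduced basis satisfies
‖b_1‖ ≤ (δ - 1/4)^{-(n-1)/4} · vol(L(B))^{1/n}. -/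
theorem LLL_hermite_bound {n m : ℕ} (hn : 0 < n) (b : Fin n → EuclideanSpace ℝ (Fin m))
    (hLI : LinearIndependent ℝ b) (δ : ℝ) (hδ1 : 1/4 < δ) (hδ2 : δ ≤ 1)
    (hsize : SizeReduced b)
    (hlovasz : ∀ k : ℕ, (hk : k + 1 < n) →
      δ * ‖projPerp b k (b ⟨k, Nat.lt_of_succ_lt hk⟩)‖ ^ 2 ≤
        ‖projPerp b k (b ⟨k + 1, hk⟩)‖ ^ 2) :
    ‖b ⟨0, hn⟩‖ ≤
      (δ - 1/4) ^ (-(((n : ℝ) - 1) / 4)) *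
        (∏ i : Fin n, ‖bstar b i‖) ^ ((1 : ℝ) / (n : ℝ)) := by
  classical
  have hα : 0 < δ - 1/4 := by linarith
  have hb0 : ‖b ⟨0, hn⟩‖ = ‖bstar b ⟨0, hn⟩‖ := (congrArg norm (LLLaux.bstar_zero hn)).symm
  have hP : 0 < ∏ i : Fin n, ‖bstar b i‖ :=
    Finset.prod_pos fun i _ => norm_pos_iff.2 (LLLaux.bstar_ne_zero hLI i)
  obtain ⟨s, hsdef⟩ : ∃ s : ℕ, s = ∑ i : Fin n, (i : ℕ) := ⟨_, rfl⟩
  have hs2 : (s : ℝ) * 2 = (n : ℝ) * ((n : ℝ) - 1) := by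
    have h1 : s = ∑ i ∈ Finset.range n, i := by
      rw [hsdef]; exact Fin.sum_univ_eq_sum_range (fun i => i) n
    have h2 := Finset.sum_range_id_mul_two n
    have h3 : ((s * 2 : ℕ) : ℝ) = ((n * (n - 1) : ℕ) : ℝ) := by
      rw [h1]; exact_mod_cast congrArg (Nat.cast (R := ℝ)) h2
    push_cast [Nat.cast_sub hn] at h3
    linarith
  have key : ‖b ⟨0, hn⟩‖ ^ (2 * n) * (δ - 1/4) ^ s ≤ (∏ i : Fin n, ‖bstar b i‖) ^ 2 := by
    have h1 : ∀ i : Fin n, ‖bstar b ⟨0, hn⟩‖ ^ 2 * (δ - 1/4) ^ (i : ℕ) ≤ ‖bstar b i‖ ^ 2 := by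
      intro i
      simpa using LLLaux.chain hn hLI hδ1 hsize hlovasz i.val i.isLt
    have h2 : ∏ i : Fin n, (‖bstar b ⟨0, hn⟩‖ ^ 2 * (δ - 1/4) ^ (i : ℕ))
        ≤ ∏ i : Fin n, ‖bstar b i‖ ^ 2 :=
      Finset.prod_le_prod (fun i _ => by positivity) (fun i _ => h1 i)
    have h3 : ∏ i : Fin n, (‖bstar b ⟨0, hn⟩‖ ^ 2 * (δ - 1/4) ^ (i : ℕ))
        = ‖bstar b ⟨0, hn⟩‖ ^ (2 * n) * (δ - 1/4) ^ s := by
      rw [Finset.prod_mul_distrib, Finset.prod_const, Finset.prod_pow_eq_pow_sum, ← hsdef,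
        ← pow_mul]
      simp [mul_comm]
    have h4 : ∏ i : Fin n, ‖bstar b i‖ ^ 2 = (∏ i : Fin n, ‖bstar b i‖) ^ 2 :=
      Finset.prod_pow _ _ _
    rw [hb0, ← h3, ← h4]
    exact h2
  exact LLLaux.final_calc n hn (δ - 1/4) (∏ i : Fin n, ‖bstar b i‖) ‖b ⟨0, hn⟩‖ 0 hα hP
    (norm_nonneg _) s hs2 key
end

section
/- A δ-LLL reduced basis B = [b_1,…,b_n] satisfies ‖b_1‖ ≤ (δ − 1/4)^{−(n−1)/2} · λ_1(L(B)), where λ_1(L) is the length of a shortest nonzero lattice vector. -/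
open Finset

namespace LLLwork

variable {n m : ℕ}

noncomputable def K (b : Fin n → EuclideanSpace ℝ (Fin m)) (j : ℕ) :
    Submodule ℝ (EuclideanSpace ℝ (Fin m)) :=
  Submodule.span ℝ (b '' {i | (i : ℕ) < j})

lemma K_mono (b : Fin n → EuclideanSpace ℝ (Fin m)) {j j' : ℕ} (h : j ≤ j') : K b j ≤ K b j' :=
  Submodule.span_mono (Set.image_mono (fun i hi => lt_of_lt_of_le hi h))

lemma projPerp_mem_orthogonal (b : Fin n → EuclideanSpace ℝ (Fin m)) (j : ℕ)
    (x : EuclideanSpace ℝ (Fin m)) : projPerp b j x ∈ (K b j)ᗮ :=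
  Submodule.sub_starProjection_mem_orthogonal (K := K b j) x

lemma sub_projPerp_mem (b : Fin n → EuclideanSpace ℝ (Fin m)) (j : ℕ)
    (x : EuclideanSpace ℝ (Fin m)) : x - projPerp b j x ∈ K b j := by
  simpa [projPerp, sub_sub_cancel, K] using
    (Submodule.orthogonalProjectionOnto (K b j) x).2

lemma b_mem_K (b : Fin n → EuclideanSpace ℝ (Fin m)) {i : Fin n} {j : ℕ} (h : (i : ℕ) < j) :
    b i ∈ K b j :=
  Submodule.subset_span ⟨i, h, rfl⟩

lemma bstar_mem_orthogonal (b : Fin n → EuclideanSpace ℝ (Fin m)) (i : Fin n) :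
    bstar b i ∈ (K b i.val)ᗮ :=
  projPerp_mem_orthogonal b i.val (b i)

lemma bstar_mem_K (b : Fin n → EuclideanSpace ℝ (Fin m)) {i : Fin n} {j : ℕ} (h : (i : ℕ) < j) :
    bstar b i ∈ K b j := by
  have h1 : b i - bstar b i ∈ K b j :=
    K_mono b (le_of_lt h) (sub_projPerp_mem b i.val (b i))
  have := Submodule.sub_mem (K b j) (b_mem_K b h) h1
  simpa using this

lemma inner_bstar_eq_zero (b : Fin n → EuclideanSpace ℝ (Fin m)) {j : Fin n}
    {x : EuclideanSpace ℝ (Fin m)} (hx : x ∈ K b j.val) :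
    (inner ℝ x (bstar b j) : ℝ) = 0 :=
  Submodule.inner_right_of_mem_orthogonal hx (bstar_mem_orthogonal b j)

lemma inner_b_bstar_self (b : Fin n → EuclideanSpace ℝ (Fin m)) (j : Fin n) :
    (inner ℝ (b j) (bstar b j) : ℝ) = ‖bstar b j‖ ^ 2 := by
  have h0 : (inner ℝ (b j - bstar b j) (bstar b j) : ℝ) = 0 :=
    inner_bstar_eq_zero b (sub_projPerp_mem b j.val (b j))
  have := inner_sub_left (𝕜 := ℝ) (b j) (bstar b j) (bstar b j)
  rw [this] at h0
  rw [← real_inner_self_eq_norm_sq]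
  linarith

lemma bstar_ne_zero (b : Fin n → EuclideanSpace ℝ (Fin m)) (hLI : LinearIndependent ℝ b)
    (i : Fin n) : bstar b i ≠ 0 := by
  intro h
  have h1 : b i ∈ K b i.val := by
    have := sub_projPerp_mem b i.val (b i)
    rw [show projPerp b i.val (b i) = bstar b i from rfl, h, sub_zero] at this
    exact this
  exact hLI.notMem_span_image (s := {j : Fin n | (j : ℕ) < i.val}) (by simp) h1

end LLLwork

namespace LLLwork

lemma mem_orthogonal_of_gen {s : Set (EuclideanSpace ℝ (Fin m))}
    {u : EuclideanSpace ℝ (Fin m)} (h : ∀ x ∈ s, (inner ℝ u x : ℝ) = 0) :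
    u ∈ (Submodule.span ℝ s)ᗮ := by
  rw [Submodule.mem_orthogonal']
  intro x hx
  induction hx using Submodule.span_induction with
  | mem x hx => exact h x hx
  | zero => exact inner_zero_right u
  | add x y _ _ hx hy => rw [inner_add_right, hx, hy, add_zero]
  | smul c x _ hx => rw [real_inner_smul_right, hx, mul_zero]

lemma decomp (b : Fin n → EuclideanSpace ℝ (Fin m)) (hLI : LinearIndependent ℝ b)
    (k : ℕ) (hk : k + 1 < n) :
    projPerp b k (b ⟨k + 1, hk⟩) =
      bstar b ⟨k + 1, hk⟩ +
        mu b ⟨k + 1, hk⟩ ⟨k, Nat.lt_of_succ_lt hk⟩ • bstar b ⟨k, Nat.lt_of_succ_lt hk⟩ := by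
  set kk : Fin n := ⟨k, Nat.lt_of_succ_lt hk⟩ with hkk
  set k1 : Fin n := ⟨k + 1, hk⟩ with hk1def
  set g := bstar b kk with hg
  set w := projPerp b k (b k1) with hw
  set s := bstar b k1 with hs
  set t := mu b k1 kk with ht
  have hkval : (kk : ℕ) = k := rfl
  have hk1val : (k1 : ℕ) = k + 1 := rfl
  have hgK : g ∈ (K b k)ᗮ := bstar_mem_orthogonal b kk
  have hgg : (inner ℝ g g : ℝ) ≠ 0 := inner_self_ne_zero.mpr (bstar_ne_zero b hLI kk)
  have h1 : b k1 - s ∈ K b (k + 1) := sub_projPerp_mem b (k + 1) (b k1)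
  have h2 : b k1 - w ∈ K b k := sub_projPerp_mem b k (b k1)
  have hus : w - s ∈ K b (k + 1) := by
    have := Submodule.sub_mem _ h1 (K_mono b (Nat.le_succ k) h2)
    simpa [sub_sub_sub_cancel_left] using this
  have hworth : w ∈ (K b k)ᗮ := projPerp_mem_orthogonal b k (b k1)
  have hsorth : s ∈ (K b (k + 1))ᗮ := bstar_mem_orthogonal b k1
  have hgmem : g ∈ K b (k + 1) := bstar_mem_K b (show (kk : ℕ) < k + 1 by omega)
  have hwg : (inner ℝ w g : ℝ) = inner ℝ (b k1) g := by
    have h0 : (inner ℝ (b k1 - w) g : ℝ) = 0 := inner_bstar_eq_zero b h2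
    rw [inner_sub_left] at h0
    linarith
  have hsg : (inner ℝ s g : ℝ) = 0 := by
    rw [real_inner_comm]
    exact inner_bstar_eq_zero b hgmem
  have htg : t * (inner ℝ g g : ℝ) = inner ℝ (b k1) g := by
    show (inner ℝ (b k1) (bstar b kk) : ℝ) / (inner ℝ (bstar b kk) (bstar b kk) : ℝ) *
      (inner ℝ g g : ℝ) = _
    rw [← hg]
    exact div_mul_cancel₀ _ hgg
  set u : EuclideanSpace ℝ (Fin m) := w - s - t • g with hu
  have hu'g : (inner ℝ u g : ℝ) = 0 := by
    rw [hu, inner_sub_left, inner_sub_left, real_inner_smul_left, hwg, hsg, htg]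
    ring
  have huK : u ∈ K b (k + 1) :=
    Submodule.sub_mem _ hus (Submodule.smul_mem _ t hgmem)
  have huorthk : u ∈ (K b k)ᗮ :=
    Submodule.sub_mem _
      (Submodule.sub_mem _ hworth (Submodule.orthogonal_le (K_mono b (Nat.le_succ k)) hsorth))
      (Submodule.smul_mem _ t hgK)
  have huorth : u ∈ (K b (k + 1))ᗮ := by
    apply mem_orthogonal_of_gen
    rintro x ⟨i, hi, rfl⟩
    have hi' : (i : ℕ) < k + 1 := hi
    rcases Nat.lt_or_ge (i : ℕ) k with hik | hik
    · exact (Submodule.mem_orthogonal' _ u).mp huorthk (b i) (b_mem_K b hik)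
    · have hieq : i = kk := Fin.ext (by omega)
      rw [hieq]
      have hbg : b kk - g ∈ K b k := sub_projPerp_mem b k (b kk)
      have h3 : (inner ℝ u (b kk - g) : ℝ) = 0 :=
        (Submodule.mem_orthogonal' _ u).mp huorthk _ hbg
      rw [inner_sub_right] at h3
      linarith
  have huu : (inner ℝ u u : ℝ) = 0 := Submodule.inner_right_of_mem_orthogonal huK huorth
  have hu0 : u = 0 := inner_self_eq_zero.mp huu
  have : w - s = t • g := by
    have := sub_eq_zero.mp hu0
    linear_combination (norm := abel) this
  rw [sub_eq_iff_eq_add'] at this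
  exact this

end LLLwork

namespace LLLwork

lemma bstar_zero (b : Fin n → EuclideanSpace ℝ (Fin m)) (hn : 0 < n) :
    bstar b ⟨0, hn⟩ = b ⟨0, hn⟩ := by
  have hK : K b 0 = ⊥ := by
    simp [K, show {i : Fin n | (i : ℕ) < 0} = ∅ by simp]
  show projPerp b 0 (b ⟨0, hn⟩) = b ⟨0, hn⟩
  have hmem0 : (Submodule.orthogonalProjectionOnto (K b 0) (b ⟨0, hn⟩) : EuclideanSpace ℝ (Fin m)) ∈ K b 0 :=
    SetLike.coe_mem _
  have hmem : (Submodule.orthogonalProjectionOnto (K b 0) (b ⟨0, hn⟩) : EuclideanSpace ℝ (Fin m)) = 0 :=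
    (Submodule.mem_bot ℝ).mp (hK.le hmem0)
  show b ⟨0, hn⟩ - (Submodule.orthogonalProjectionOnto (K b 0) (b ⟨0, hn⟩) : EuclideanSpace ℝ (Fin m)) = _
  rw [hmem, sub_zero]

lemma step (b : Fin n → EuclideanSpace ℝ (Fin m)) (hLI : LinearIndependent ℝ b)
    (δ : ℝ) (hδ1 : 1/4 < δ) (hsize : SizeReduced b)
    (hlovasz : ∀ k : ℕ, (hk : k + 1 < n) →
      δ * ‖projPerp b k (b ⟨k, Nat.lt_of_succ_lt hk⟩)‖ ^ 2 ≤
        ‖projPerp b k (b ⟨k + 1, hk⟩)‖ ^ 2)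
    (k : ℕ) (hk : k + 1 < n) :
    (δ - 1/4) * ‖bstar b ⟨k, Nat.lt_of_succ_lt hk⟩‖ ^ 2 ≤ ‖bstar b ⟨k + 1, hk⟩‖ ^ 2 := by
  set kk : Fin n := ⟨k, Nat.lt_of_succ_lt hk⟩
  set k1 : Fin n := ⟨k + 1, hk⟩
  set g := bstar b kk with hg
  set s := bstar b k1 with hs
  set t := mu b k1 kk with ht
  have hlov := hlovasz k hk
  have hproj : projPerp b k (b kk) = g := rfl
  have hdec : projPerp b k (b k1) = s + t • g := decomp b hLI k hk
  have hsg : (inner ℝ s (t • g) : ℝ) = 0 := by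
    rw [real_inner_smul_right, real_inner_comm]
    rw [inner_bstar_eq_zero b (bstar_mem_K b (show (kk : ℕ) < k + 1 from Nat.lt_succ_self k))]
    ring
  have htg2 : ‖t • g‖ ^ 2 = t ^ 2 * ‖g‖ ^ 2 := by
    rw [norm_smul]
    simp [mul_pow, sq_abs]
  have hpyth : ‖s + t • g‖ ^ 2 = ‖s‖ ^ 2 + t ^ 2 * ‖g‖ ^ 2 := by
    rw [norm_add_sq_real, hsg, htg2]
    ring
  have hmu : |t| ≤ 1/2 := hsize k1 kk (by rw [Fin.lt_def]; exact Nat.lt_succ_self k)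
  have ht2 : t ^ 2 ≤ 1/4 := by
    have := abs_nonneg t
    nlinarith [sq_abs t]
  rw [hproj, hdec, hpyth] at hlov
  nlinarith [sq_nonneg ‖g‖, sq_nonneg ‖s‖]

lemma iter (b : Fin n → EuclideanSpace ℝ (Fin m)) (hLI : LinearIndependent ℝ b)
    (hn : 0 < n) (δ : ℝ) (hδ1 : 1/4 < δ) (hsize : SizeReduced b)
    (hlovasz : ∀ k : ℕ, (hk : k + 1 < n) →
      δ * ‖projPerp b k (b ⟨k, Nat.lt_of_succ_lt hk⟩)‖ ^ 2 ≤
        ‖projPerp b k (b ⟨k + 1, hk⟩)‖ ^ 2) :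
    ∀ j : ℕ, (hj : j < n) →
      (δ - 1/4) ^ j * ‖bstar b ⟨0, hn⟩‖ ^ 2 ≤ ‖bstar b ⟨j, hj⟩‖ ^ 2 := by
  intro j
  induction j with
  | zero => intro hj; simp
  | succ j ih =>
    intro hj
    have hj' : j < n := Nat.lt_of_succ_lt hj
    have h1 := ih hj'
    have h2 := step b hLI δ hδ1 hsize hlovasz j hj
    have hc : (0 : ℝ) < δ - 1/4 := by linarith
    calc (δ - 1/4) ^ (j + 1) * ‖bstar b ⟨0, hn⟩‖ ^ 2
        = (δ - 1/4) * ((δ - 1/4) ^ j * ‖bstar b ⟨0, hn⟩‖ ^ 2) := by ring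
      _ ≤ (δ - 1/4) * ‖bstar b ⟨j, hj'⟩‖ ^ 2 := by
          exact mul_le_mul_of_nonneg_left h1 hc.le
      _ ≤ ‖bstar b ⟨j + 1, hj⟩‖ ^ 2 := h2

lemma shortest (b : Fin n → EuclideanSpace ℝ (Fin m)) (hLI : LinearIndependent ℝ b)
    (v : EuclideanSpace ℝ (Fin m)) (hv : v ∈ Submodule.span ℤ (Set.range b)) (hv0 : v ≠ 0) :
    ∃ j : Fin n, ‖bstar b j‖ ≤ ‖v‖ := by
  obtain ⟨z, hz⟩ := (Finsupp.mem_span_range_iff_exists_finsupp).mp hv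
  have hzne : ∃ i, z i ≠ 0 := by
    by_contra h
    push_neg at h
    apply hv0
    rw [← hz]
    simp [Finsupp.sum, h]
  set S : Finset (Fin n) := z.support with hS
  have hSne : S.Nonempty := by
    obtain ⟨i, hi⟩ := hzne
    exact ⟨i, Finsupp.mem_support_iff.mpr hi⟩
  set j := S.max' hSne with hj
  have hjS : j ∈ S := S.max'_mem hSne
  have hzj : z j ≠ 0 := Finsupp.mem_support_iff.mp hjS
  set g := bstar b j with hg
  have hgne : g ≠ 0 := bstar_ne_zero b hLI j
  have hgpos : 0 < ‖g‖ := norm_pos_iff.mpr hgne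
  have hinner : (inner ℝ v g : ℝ) = (z j : ℝ) * ‖g‖ ^ 2 := by
    rw [← hz]
    rw [Finsupp.sum]
    rw [sum_inner]
    rw [Finset.sum_eq_single j]
    · rw [← Int.cast_smul_eq_zsmul ℝ, real_inner_smul_left, inner_b_bstar_self b j]
    · intro i hiS hij
      have hile : i ≤ j := Finset.le_max' S i hiS
      have hilt : (i : ℕ) < (j : ℕ) := by
        rcases lt_or_eq_of_le hile with h | h
        · exact h
        · exact absurd h hij
      rw [← Int.cast_smul_eq_zsmul ℝ, real_inner_smul_left,
        inner_bstar_eq_zero b (b_mem_K b hilt), mul_zero]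
    · intro hjS'
      exact absurd hjS hjS'
  have hcs : |(inner ℝ v g : ℝ)| ≤ ‖v‖ * ‖g‖ := abs_real_inner_le_norm v g
  have hzj1 : (1 : ℝ) ≤ |(z j : ℝ)| := by
    rw [← Int.cast_abs]
    exact_mod_cast Int.one_le_abs hzj
  refine ⟨j, ?_⟩
  have : ‖g‖ ^ 2 ≤ ‖v‖ * ‖g‖ := by
    calc ‖g‖ ^ 2 = 1 * ‖g‖ ^ 2 := by ring
      _ ≤ |(z j : ℝ)| * ‖g‖ ^ 2 := by nlinarith [sq_nonneg ‖g‖]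
      _ = |(inner ℝ v g : ℝ)| := by rw [hinner, abs_mul, abs_of_nonneg (sq_nonneg ‖g‖)]
      _ ≤ ‖v‖ * ‖g‖ := hcs
  nlinarith

end LLLwork


/-- a δ-LLL reduced basis satisfies ‖b_1‖ ≤ (δ - 1/4)^{-(n-1)/2} · λ₁(L(B)),
stated as: ‖b_1‖ ≤ (δ - 1/4)^{-(n-1)/2}·‖v‖ for every nonzero lattice vector v. -/
theorem LLL_approx_svp {n m : ℕ} (hn : 0 < n) (b : Fin n → EuclideanSpace ℝ (Fin m))
    (hLI : LinearIndependent ℝ b) (δ : ℝ) (hδ1 : 1/4 < δ) (hδ2 : δ ≤ 1)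
    (hsize : SizeReduced b)
    (hlovasz : ∀ k : ℕ, (hk : k + 1 < n) →
      δ * ‖projPerp b k (b ⟨k, Nat.lt_of_succ_lt hk⟩)‖ ^ 2 ≤
        ‖projPerp b k (b ⟨k + 1, hk⟩)‖ ^ 2) :
    ∀ v ∈ Submodule.span ℤ (Set.range b), v ≠ 0 →
      ‖b ⟨0, hn⟩‖ ≤ (δ - 1/4) ^ (-(((n : ℝ) - 1) / 2)) * ‖v‖ := by
  intro v hv hv0
  obtain ⟨j, hj⟩ := LLLwork.shortest b hLI v hv hv0
  set c : ℝ := δ - 1/4 with hc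
  have hcpos : (0 : ℝ) < c := by rw [hc]; linarith
  have hc1 : c ≤ 1 := by rw [hc]; linarith
  have hiter := LLLwork.iter b hLI hn δ hδ1 hsize hlovasz j.val j.isLt
  have hb0 : bstar b ⟨0, hn⟩ = b ⟨0, hn⟩ := LLLwork.bstar_zero b hn
  rw [hb0] at hiter
  have hjfin : (⟨j.val, j.isLt⟩ : Fin n) = j := rfl
  rw [hjfin] at hiter
  -- c ^ (n-1) ≤ c ^ j.val
  have hpow : c ^ (n - 1) ≤ c ^ j.val :=
    pow_le_pow_of_le_one hcpos.le hc1 (by omega)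
  have hbj2 : ‖bstar b j‖ ^ 2 ≤ ‖v‖ ^ 2 := by
    have := norm_nonneg (bstar b j)
    nlinarith
  have hkey : c ^ (n - 1) * ‖b ⟨0, hn⟩‖ ^ 2 ≤ ‖v‖ ^ 2 := by
    have h1 : c ^ (n - 1) * ‖b ⟨0, hn⟩‖ ^ 2 ≤ c ^ j.val * ‖b ⟨0, hn⟩‖ ^ 2 :=
      mul_le_mul_of_nonneg_right hpow (sq_nonneg _)
    linarith
  set r : ℝ := c ^ (-(((n : ℝ) - 1) / 2)) with hr
  have hrpos : 0 < r := Real.rpow_pos_of_pos hcpos _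
  have hcast : ((n - 1 : ℕ) : ℝ) = (n : ℝ) - 1 := by
    rw [Nat.cast_sub hn, Nat.cast_one]
  have hr2 : r ^ 2 * c ^ (n - 1) = 1 := by
    rw [hr, ← Real.rpow_natCast c (n - 1), hcast,
      ← Real.rpow_natCast (c ^ (-(((n : ℝ) - 1) / 2))) 2, ← Real.rpow_mul hcpos.le,
      ← Real.rpow_add hcpos,
      show (-(((n : ℝ) - 1) / 2) * ((2 : ℕ) : ℝ) + ((n : ℝ) - 1)) = 0 by push_cast; ring,
      Real.rpow_zero]
  have hsq : ‖b ⟨0, hn⟩‖ ^ 2 ≤ (r * ‖v‖) ^ 2 := by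
    have h2 : r ^ 2 * (c ^ (n - 1) * ‖b ⟨0, hn⟩‖ ^ 2) ≤ r ^ 2 * ‖v‖ ^ 2 :=
      mul_le_mul_of_nonneg_left hkey (sq_nonneg r)
    calc ‖b ⟨0, hn⟩‖ ^ 2 = r ^ 2 * c ^ (n - 1) * ‖b ⟨0, hn⟩‖ ^ 2 := by rw [hr2]; ring
      _ ≤ r ^ 2 * ‖v‖ ^ 2 := by linarith [h2]
      _ = (r * ‖v‖) ^ 2 := by ring
  have hrv : 0 ≤ r * ‖v‖ := by positivity
  calc ‖b ⟨0, hn⟩‖ = Real.sqrt (‖b ⟨0, hn⟩‖ ^ 2) := by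
        rw [Real.sqrt_sq (norm_nonneg _)]
    _ ≤ Real.sqrt ((r * ‖v‖) ^ 2) := Real.sqrt_le_sqrt hsq
    _ = r * ‖v‖ := Real.sqrt_sq hrv
end
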